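/- For every x₀ ∈ E and y, z ∈ E, writing x_s = φ_s(x₀), there exists a unique continuous a : [0,∞) → E with a(0) = 0 and a(t) = ∫₀^t Λ_{t−s} { DN(x_s)[a(s)] + D²N(x_s)[ Dφ_s(x₀)[y], Dφ_s(x₀)[z] ] } ds for all t ≥ 0. Moreover, for every t ≥ 0 the map x ↦ φ_t(x) is twice Fréchet differentiable at x₀ in the topology of E, and D²φ_t(x₀)[y,z] = a(t). -/

import Mathlib

open MeasureTheory Filter Set
open scoped RealInnerProductSpace
open scoped Topology

set_option linter.unusedSectionVars false
set_option linter.unusedVariables false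
set_option maxHeartbeats 1000000

noncomputable section

namespace Stmt2Aux


variable {E : Type*} [NormedAddCommGroup E] [NormedSpace ℝ E] [CompleteSpace E]
variable (ΛE : ℝ → E →L[ℝ] E)

theorem cont_apply (hE1 : ∀ r : ℝ, 0 ≤ r → ‖ΛE r‖ ≤ 1)
    (hsc : ∀ x : E, ContinuousOn (fun t => ΛE t x) (Ici 0))
    {t : ℝ} (ht : 0 ≤ t) {g : ℝ → E} (hg : ContinuousOn g (Icc 0 t)) :
    ContinuousOn (fun r => ΛE r (g r)) (Icc 0 t) := by
  intro r₀ hr₀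
  have h1 : ContinuousWithinAt (fun r => ΛE r (g r₀)) (Icc 0 t) r₀ :=
    ((hsc (g r₀)) r₀ hr₀.1).mono (fun s hs => hs.1)
  have h2 : Tendsto (fun r => ΛE r (g r - g r₀)) (nhdsWithin r₀ (Icc 0 t)) (nhds 0) := by
    apply squeeze_zero_norm' (a := fun r => ‖g r - g r₀‖)
    · filter_upwards [self_mem_nhdsWithin] with r hr
      calc ‖ΛE r (g r - g r₀)‖ ≤ ‖ΛE r‖ * ‖g r - g r₀‖ := (ΛE r).le_opNorm _
        _ ≤ 1 * ‖g r - g r₀‖ := by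
            exact mul_le_mul_of_nonneg_right (hE1 r hr.1) (norm_nonneg _)
        _ = ‖g r - g r₀‖ := one_mul _
    · have : Tendsto (fun r => g r - g r₀) (nhdsWithin r₀ (Icc 0 t)) (nhds (g r₀ - g r₀)) :=
        Tendsto.sub (hg r₀ hr₀) tendsto_const_nhds
      simpa using this.norm
  have : ContinuousWithinAt (fun r => ΛE r (g r₀) + ΛE r (g r - g r₀)) (Icc 0 t) r₀ := by
    unfold ContinuousWithinAt
    have : Tendsto (fun r => ΛE r (g r₀) + ΛE r (g r - g r₀)) (nhdsWithin r₀ (Icc 0 t))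
        (nhds (ΛE r₀ (g r₀) + 0)) := Tendsto.add h1 h2
    simpa using this
  refine this.congr (fun r _ => ?_) ?_ <;> simp [map_sub]

theorem cont_kernel (hE1 : ∀ r : ℝ, 0 ≤ r → ‖ΛE r‖ ≤ 1)
    (hsc : ∀ x : E, ContinuousOn (fun t => ΛE t x) (Ici 0))
    {t : ℝ} (ht : 0 ≤ t) {f : ℝ → E} (hf : ContinuousOn f (Icc 0 t)) :
    ContinuousOn (fun s => ΛE (t - s) (f s)) (Icc 0 t) := by
  have hg : ContinuousOn (fun r => f (t - r)) (Icc 0 t) := by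
    apply hf.comp (continuous_const.sub continuous_id).continuousOn
    intro s hs
    exact ⟨by simp; linarith [hs.2], by simp; linarith [hs.1]⟩
  have h := cont_apply ΛE hE1 hsc ht hg
  have h2 : ContinuousOn ((fun r => ΛE r (f (t - r))) ∘ (fun s => t - s)) (Icc 0 t) := by
    apply h.comp (continuous_const.sub continuous_id).continuousOn
    intro s hs
    exact ⟨by simp; linarith [hs.2], by simp; linarith [hs.1]⟩
  refine h2.congr (fun s hs => ?_)
  simp [Function.comp]

theorem intable (hE1 : ∀ r : ℝ, 0 ≤ r → ‖ΛE r‖ ≤ 1)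
    (hsc : ∀ x : E, ContinuousOn (fun t => ΛE t x) (Ici 0))
    {t : ℝ} (ht : 0 ≤ t) {f : ℝ → E} (hf : ContinuousOn f (Icc 0 t)) :
    IntervalIntegrable (fun s => ΛE (t - s) (f s)) volume 0 t := by
  have := cont_kernel ΛE hE1 hsc ht hf
  exact (this.mono (by rw [uIcc_of_le ht])).intervalIntegrable

theorem norm_int_le (hE1 : ∀ r : ℝ, 0 ≤ r → ‖ΛE r‖ ≤ 1)
    {t : ℝ} (ht : 0 ≤ t) {f : ℝ → E} {b : ℝ → ℝ}
    (hb : IntervalIntegrable b volume 0 t)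
    (hfb : ∀ s ∈ Icc 0 t, ‖f s‖ ≤ b s) :
    ‖∫ s in (0:ℝ)..t, ΛE (t - s) (f s)‖ ≤ ∫ s in (0:ℝ)..t, b s := by
  have hb0 : (0:ℝ) ≤ ∫ s in (0:ℝ)..t, b s := by
    apply intervalIntegral.integral_nonneg ht
    intro s hs
    exact le_trans (norm_nonneg _) (hfb s hs)
  have key : ‖∫ s in (0:ℝ)..t, ΛE (t - s) (f s)‖ ≤ |∫ s in (0:ℝ)..t, b s| := by
    apply intervalIntegral.norm_integral_le_abs_of_norm_le _ hb
    rw [uIoc_of_le ht]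
    filter_upwards [ae_restrict_mem measurableSet_Ioc] with s hs
    have hs' : s ∈ Icc 0 t := ⟨le_of_lt hs.1, hs.2⟩
    calc ‖ΛE (t - s) (f s)‖ ≤ ‖ΛE (t - s)‖ * ‖f s‖ := (ΛE (t - s)).le_opNorm _
      _ ≤ 1 * (b s) := by
          apply mul_le_mul (hE1 _ (by linarith [hs'.2])) (hfb s hs') (norm_nonneg _) zero_le_one
      _ = b s := one_mul _
  rwa [abs_of_nonneg hb0] at key



theorem gronwall {f : ℝ → ℝ} {T C Kc : ℝ} (hT : 0 ≤ T) (hC : 0 ≤ C) (hK : 0 ≤ Kc)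
    (hf : ContinuousOn f (Icc 0 T))
    (hle : ∀ t ∈ Icc (0:ℝ) T, f t ≤ C + Kc * ∫ s in (0:ℝ)..t, f s) :
    ∀ t ∈ Icc (0:ℝ) T, f t ≤ C * Real.exp (Kc * t) := by
  obtain ⟨M, hM⟩ := (isCompact_Icc (a := (0:ℝ)) (b := T)).exists_bound_of_continuousOn hf
  have hM0 : 0 ≤ M := le_trans (norm_nonneg _) (hM 0 (left_mem_Icc.2 hT))
  have key : ∀ n : ℕ, ∀ t ∈ Icc (0:ℝ) T,
      f t ≤ C * (∑ k ∈ Finset.range n, (Kc*t)^k / (Nat.factorial k)) +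
        M * (Kc*t)^n / (Nat.factorial n) := by
    intro n
    induction n with
    | zero =>
      intro t ht
      have : f t ≤ M := le_trans (le_abs_self _) (by rw [← Real.norm_eq_abs]; exact hM t ht)
      simpa using this
    | succ n ih =>
      intro t ht
      have ht0 : (0:ℝ) ≤ t := ht.1
      set P : ℝ → ℝ := fun s => C * (∑ k ∈ Finset.range n, (Kc*s)^k / (Nat.factorial k)) +
        M * (Kc*s)^n / (Nat.factorial n) with hP
      have hPcont : Continuous P := by fun_prop
      have hfint : IntervalIntegrable f volume 0 t := by
        apply ContinuousOn.intervalIntegrable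
        rw [uIcc_of_le ht0]
        exact hf.mono (Icc_subset_Icc_right ht.2)
      have hmono : ∫ s in (0:ℝ)..t, f s ≤ ∫ s in (0:ℝ)..t, P s := by
        apply intervalIntegral.integral_mono_on ht0 hfint (hPcont.intervalIntegrable 0 t)
        intro s hs
        exact ih s ⟨hs.1, le_trans hs.2 ht.2⟩
      have h1 : ∀ k : ℕ, ∫ s in (0:ℝ)..t, (Kc*s)^k / (Nat.factorial k) =
          Kc^k * t^(k+1) / (((k:ℝ)+1) * Nat.factorial k) := by
        intro k
        have e1 : (fun s => (Kc*s)^k / (Nat.factorial k : ℝ)) =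
            fun s => (Kc^k / (Nat.factorial k : ℝ)) * s^k := by
          funext s; rw [mul_pow]; ring
        rw [e1, intervalIntegral.integral_const_mul, integral_pow,
          zero_pow (Nat.succ_ne_zero k), sub_zero, div_mul_div_comm,
          mul_comm ((Nat.factorial k : ℝ)) (((k:ℝ)+1))]
      have i1 : IntervalIntegrable
          (fun s => C * (∑ k ∈ Finset.range n, (Kc*s)^k / (Nat.factorial k))) volume 0 t :=
        (by fun_prop : Continuous fun s =>
          C * (∑ k ∈ Finset.range n, (Kc*s)^k / (Nat.factorial k))).intervalIntegrable 0 t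
      have i2 : IntervalIntegrable (fun s => M * (Kc*s)^n / (Nat.factorial n)) volume 0 t :=
        (by fun_prop : Continuous fun s => M * (Kc*s)^n / (Nat.factorial n)).intervalIntegrable 0 t
      have hPint : ∫ s in (0:ℝ)..t, P s =
          C * (∑ k ∈ Finset.range n, Kc^k * t^(k+1) / (((k:ℝ)+1) * Nat.factorial k)) +
            M * (Kc^n * t^(n+1) / (((n:ℝ)+1) * Nat.factorial n)) := by
        rw [hP, intervalIntegral.integral_add i1 i2]
        congr 1
        · rw [intervalIntegral.integral_const_mul,
            intervalIntegral.integral_finset_sum (fun k _ => (by fun_prop :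
              Continuous fun s => (Kc*s)^k / (Nat.factorial k : ℝ)).intervalIntegrable 0 t)]
          congr 1
          exact Finset.sum_congr rfl fun k _ => h1 k
        · have e2 : (fun s => M * (Kc*s)^n / (Nat.factorial n : ℝ)) =
              fun s => M * ((Kc*s)^n / (Nat.factorial n : ℝ)) := by funext s; ring
          rw [e2, intervalIntegral.integral_const_mul, h1 n]
      have e3 : ∀ k : ℕ, (Kc*t)^(k+1) / (Nat.factorial (k+1) : ℝ) =
          Kc * (Kc^k * t^(k+1) / (((k:ℝ)+1) * Nat.factorial k)) := by
        intro k
        have hk : ((Nat.factorial k : ℝ)) ≠ 0 := Nat.cast_ne_zero.2 (Nat.factorial_ne_zero k)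
        have hk1 : ((k:ℝ)+1) ≠ 0 := by positivity
        have hfs : ((Nat.factorial (k+1) : ℝ)) = ((k:ℝ)+1) * (Nat.factorial k : ℝ) := by
          push_cast [Nat.factorial_succ]; ring
        rw [hfs, mul_pow]
        field_simp
        ring
      have target_eq : C * (∑ k ∈ Finset.range (n+1), (Kc*t)^k / (Nat.factorial k)) +
          M * (Kc*t)^(n+1) / (Nat.factorial (n+1)) =
          C + Kc * (C * (∑ k ∈ Finset.range n, Kc^k * t^(k+1) / (((k:ℝ)+1) * Nat.factorial k)) +
            M * (Kc^n * t^(n+1) / (((n:ℝ)+1) * Nat.factorial n))) := by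
        rw [Finset.sum_range_succ']
        have hcongr : ∀ k ∈ Finset.range n, (Kc*t)^(k+1) / (Nat.factorial (k+1) : ℝ) =
            Kc * (Kc^k * t^(k+1) / (((k:ℝ)+1) * Nat.factorial k)) := fun k _ => e3 k
        rw [Finset.sum_congr rfl hcongr, ← Finset.mul_sum]
        have h4 : M * (Kc*t)^(n+1) / (Nat.factorial (n+1) : ℝ) =
            M * (Kc * (Kc^n * t^(n+1) / (((n:ℝ)+1) * Nat.factorial n))) := by
          rw [mul_div_assoc, e3 n]
        rw [h4]
        simp [Nat.factorial_zero]
        ring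
      calc f t ≤ C + Kc * ∫ s in (0:ℝ)..t, f s := hle t ht
        _ ≤ C + Kc * ∫ s in (0:ℝ)..t, P s := by
            exact add_le_add_right (mul_le_mul_of_nonneg_left hmono hK) C
        _ = C * (∑ k ∈ Finset.range (n+1), (Kc*t)^k / (Nat.factorial k)) +
            M * (Kc*t)^(n+1) / (Nat.factorial (n+1)) := by rw [hPint, target_eq]
  intro t ht
  have hsum : Tendsto (fun n => ∑ k ∈ Finset.range n, (Kc*t)^k / (Nat.factorial k : ℝ)) atTop
      (𝓝 (Real.exp (Kc*t))) := by
    have h := (NormedSpace.expSeries_div_hasSum_exp (Kc*t)).tendsto_sum_nat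
    rwa [← Real.exp_eq_exp_ℝ] at h
  have hz : Tendsto (fun n => (Kc*t)^n / (Nat.factorial n : ℝ)) atTop (𝓝 0) :=
    (Real.summable_pow_div_factorial (Kc*t)).tendsto_atTop_zero
  have hlim : Tendsto (fun n => C * (∑ k ∈ Finset.range n, (Kc*t)^k / (Nat.factorial k : ℝ)) +
      M * (Kc*t)^n / (Nat.factorial n : ℝ)) atTop (𝓝 (C * Real.exp (Kc*t) + M * 0)) := by
    apply Tendsto.add (hsum.const_mul C)
    have h2 := hz.const_mul M
    simpa [mul_div_assoc] using h2
  have hfin := ge_of_tendsto' hlim (fun n => key n t ht)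
  simpa using hfin

theorem cont_int (hE1 : ∀ r : ℝ, 0 ≤ r → ‖ΛE r‖ ≤ 1)
    (hsc : ∀ x : E, ContinuousOn (fun t => ΛE t x) (Ici 0))
    {f : ℝ → E} (hf : ContinuousOn f (Ici 0)) :
    ContinuousOn (fun t => ∫ s in (0:ℝ)..t, ΛE (t - s) (f s)) (Ici 0) := by
  have hsub : ∀ τ : ℝ, (∫ s in (0:ℝ)..τ, ΛE (τ - s) (f s))
      = ∫ r in (0:ℝ)..τ, ΛE r (f (τ - r)) := by
    intro τ
    have e : (fun s => ΛE (τ - s) (f s)) = fun s => (fun r => ΛE r (f (τ - r))) (τ - s) := by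
      funext s; simp
    rw [e, intervalIntegral.integral_comp_sub_left (fun r => ΛE r (f (τ - r))) τ]
    simp
  have hΨc : ∀ τ : ℝ, 0 ≤ τ → ContinuousOn (fun r => ΛE r (f (τ - r))) (Icc 0 τ) := by
    intro τ hτ
    apply cont_apply ΛE hE1 hsc hτ
    apply hf.comp (continuous_const.sub continuous_id).continuousOn
    intro r hr
    simp only [mem_Ici, id_eq, Pi.sub_apply]
    linarith [hr.2]
  have hΨi : ∀ τ : ℝ, 0 ≤ τ → IntervalIntegrable (fun r => ΛE r (f (τ - r))) volume 0 τ := by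
    intro τ hτ
    exact ((hΨc τ hτ).mono (by rw [uIcc_of_le hτ])).intervalIntegrable
  intro t₀ ht₀
  rw [Metric.continuousWithinAt_iff]
  intro ε hε
  set T := t₀ + 1 with hT
  have hT0 : (0:ℝ) ≤ T := by simp only [hT]; linarith [mem_Ici.1 ht₀]
  have ht₀T : t₀ ≤ T := by simp only [hT]; linarith
  obtain ⟨M, hM⟩ := (isCompact_Icc (a := (0:ℝ)) (b := T)).exists_bound_of_continuousOn
    (hf.mono Icc_subset_Ici_self)
  have hM0 : 0 ≤ M := le_trans (norm_nonneg _) (hM 0 ⟨le_refl _, hT0⟩)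
  set ε' := ε / (2 * (T + 1)) with hε'
  have hε'0 : 0 < ε' := by
    apply div_pos hε
    nlinarith
  have huc := (isCompact_Icc (a := (0:ℝ)) (b := T)).uniformContinuousOn_of_continuous
    (hf.mono Icc_subset_Ici_self)
  obtain ⟨δ₁, hδ₁0, hδ₁⟩ := Metric.uniformContinuousOn_iff.1 huc ε' hε'0
  set δ := min δ₁ (min 1 (ε / (2 * (M + 1)))) with hδ
  have hδ0 : 0 < δ := by
    apply lt_min hδ₁0
    apply lt_min one_pos
    apply div_pos hε
    nlinarith
  refine ⟨δ, hδ0, ?_⟩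
  intro t ht hdist
  have ht0 : (0:ℝ) ≤ t := mem_Ici.1 ht
  have habs : |t - t₀| < δ := by rwa [Real.dist_eq] at hdist
  have htT : t ≤ T := by
    have h1 : t - t₀ < δ := lt_of_le_of_lt (le_abs_self _) habs
    have h2 : δ ≤ 1 := le_trans (min_le_right _ _) (min_le_left _ _)
    simp only [hT]; linarith
  have hδd1 : |t - t₀| < δ₁ := lt_of_lt_of_le habs (min_le_left _ _)
  have hδeps : |t - t₀| ≤ ε / (2 * (M + 1)) :=
    le_of_lt (lt_of_lt_of_le habs (le_trans (min_le_right _ _) (min_le_right _ _)))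
  rw [dist_eq_norm, hsub t, hsub t₀]
  -- uniform continuity bound for the common part
  have hucb : ∀ m : ℝ, 0 ≤ m → m ≤ t → m ≤ t₀ → ∀ r ∈ Set.uIoc (0:ℝ) m,
      ‖ΛE r (f (t - r)) - ΛE r (f (t₀ - r))‖ ≤ ε' := by
    intro m hm0 hmt hmt₀ r hr
    rw [uIoc_of_le hm0] at hr
    have hr0 : 0 ≤ r := le_of_lt hr.1
    have h1 : t - r ∈ Icc (0:ℝ) T := ⟨by linarith [hr.2], by linarith⟩
    have h2 : t₀ - r ∈ Icc (0:ℝ) T := ⟨by linarith [hr.2], by linarith⟩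
    have hdd : dist (t - r) (t₀ - r) < δ₁ := by
      rw [Real.dist_eq]
      simpa using hδd1
    have := hδ₁ _ h1 _ h2 hdd
    rw [dist_eq_norm] at this
    calc ‖ΛE r (f (t - r)) - ΛE r (f (t₀ - r))‖
        = ‖ΛE r (f (t - r) - f (t₀ - r))‖ := by rw [map_sub]
      _ ≤ ‖ΛE r‖ * ‖f (t - r) - f (t₀ - r)‖ := (ΛE r).le_opNorm _
      _ ≤ 1 * ‖f (t - r) - f (t₀ - r)‖ :=
          mul_le_mul_of_nonneg_right (hE1 r hr0) (norm_nonneg _)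
      _ = ‖f (t - r) - f (t₀ - r)‖ := one_mul _
      _ ≤ ε' := le_of_lt this
  have e1 : ∀ m : ℝ, 0 ≤ m → m ≤ T → ε' * m < ε / 2 := by
    intro m hm0 hmT
    rw [hε', div_mul_eq_mul_div, div_lt_div_iff₀ (by nlinarith) (by norm_num)]
    nlinarith
  have e2 : M * |t - t₀| ≤ ε / 2 := by
    calc M * |t - t₀| ≤ M * (ε / (2 * (M + 1))) :=
          mul_le_mul_of_nonneg_left hδeps hM0
      _ ≤ ε / 2 := by
          rw [mul_div_assoc', div_le_div_iff₀ (by nlinarith) (by norm_num)]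
          nlinarith
  rcases le_total t₀ t with hc | hc
  · -- t₀ ≤ t
    have i1 : IntervalIntegrable (fun r => ΛE r (f (t - r))) volume 0 t₀ :=
      (hΨi t ht0).mono_set (by
        rw [uIcc_of_le (mem_Ici.1 ht₀), uIcc_of_le ht0]
        exact Icc_subset_Icc_right hc)
    have i2 : IntervalIntegrable (fun r => ΛE r (f (t - r))) volume t₀ t :=
      (hΨi t ht0).mono_set (by
        rw [uIcc_of_le hc, uIcc_of_le ht0]
        exact Icc_subset_Icc_left (mem_Ici.1 ht₀))
    have i3 : IntervalIntegrable (fun r => ΛE r (f (t₀ - r))) volume 0 t₀ := hΨi t₀ (mem_Ici.1 ht₀)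
    have hsplit : (∫ r in (0:ℝ)..t, ΛE r (f (t - r))) - ∫ r in (0:ℝ)..t₀, ΛE r (f (t₀ - r))
        = ((∫ r in (0:ℝ)..t₀, ΛE r (f (t - r))) - ∫ r in (0:ℝ)..t₀, ΛE r (f (t₀ - r)))
          + ∫ r in t₀..t, ΛE r (f (t - r)) := by
      rw [← intervalIntegral.integral_add_adjacent_intervals i1 i2]; abel
    rw [hsplit]
    have b1 : ‖(∫ r in (0:ℝ)..t₀, ΛE r (f (t - r))) - ∫ r in (0:ℝ)..t₀, ΛE r (f (t₀ - r))‖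
        ≤ ε' * t₀ := by
      rw [← intervalIntegral.integral_sub i1 i3]
      have := intervalIntegral.norm_integral_le_of_norm_le_const
        (f := fun r => ΛE r (f (t - r)) - ΛE r (f (t₀ - r))) (C := ε') (a := 0) (b := t₀)
        (fun r hr => hucb t₀ (mem_Ici.1 ht₀) hc (le_refl _) r hr)
      simpa [abs_of_nonneg (mem_Ici.1 ht₀)] using this
    have b2 : ‖∫ r in t₀..t, ΛE r (f (t - r))‖ ≤ M * |t - t₀| := by
      have := intervalIntegral.norm_integral_le_of_norm_le_const
        (f := fun r => ΛE r (f (t - r))) (C := M) (a := t₀) (b := t) ?_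
      · exact this
      · intro r hr
        rw [uIoc_of_le hc] at hr
        have hr0 : 0 ≤ r := le_trans (mem_Ici.1 ht₀) (le_of_lt hr.1)
        have hfr : t - r ∈ Icc (0:ℝ) T := ⟨by linarith [hr.2], by linarith⟩
        calc ‖ΛE r (f (t - r))‖ ≤ ‖ΛE r‖ * ‖f (t - r)‖ := (ΛE r).le_opNorm _
          _ ≤ 1 * M := mul_le_mul (hE1 r hr0) (hM _ hfr) (norm_nonneg _) zero_le_one
          _ = M := one_mul _
    calc ‖_ + _‖ ≤ ε' * t₀ + M * |t - t₀| := le_trans (norm_add_le _ _) (add_le_add b1 b2)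
      _ < ε := by
          have := e1 t₀ (mem_Ici.1 ht₀) ht₀T
          linarith
  · -- t ≤ t₀
    have i1 : IntervalIntegrable (fun r => ΛE r (f (t₀ - r))) volume 0 t :=
      (hΨi t₀ (mem_Ici.1 ht₀)).mono_set (by
        rw [uIcc_of_le ht0, uIcc_of_le (mem_Ici.1 ht₀)]
        exact Icc_subset_Icc_right hc)
    have i2 : IntervalIntegrable (fun r => ΛE r (f (t₀ - r))) volume t t₀ :=
      (hΨi t₀ (mem_Ici.1 ht₀)).mono_set (by
        rw [uIcc_of_le hc, uIcc_of_le (mem_Ici.1 ht₀)]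
        exact Icc_subset_Icc_left ht0)
    have i3 : IntervalIntegrable (fun r => ΛE r (f (t - r))) volume 0 t := hΨi t ht0
    have hsplit : (∫ r in (0:ℝ)..t, ΛE r (f (t - r))) - ∫ r in (0:ℝ)..t₀, ΛE r (f (t₀ - r))
        = ((∫ r in (0:ℝ)..t, ΛE r (f (t - r))) - ∫ r in (0:ℝ)..t, ΛE r (f (t₀ - r)))
          - ∫ r in t..t₀, ΛE r (f (t₀ - r)) := by
      rw [← intervalIntegral.integral_add_adjacent_intervals i1 i2]; abel
    rw [hsplit]
    have b1 : ‖(∫ r in (0:ℝ)..t, ΛE r (f (t - r))) - ∫ r in (0:ℝ)..t, ΛE r (f (t₀ - r))‖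
        ≤ ε' * t := by
      rw [← intervalIntegral.integral_sub i3 i1]
      have := intervalIntegral.norm_integral_le_of_norm_le_const
        (f := fun r => ΛE r (f (t - r)) - ΛE r (f (t₀ - r))) (C := ε') (a := 0) (b := t)
        (fun r hr => hucb t ht0 (le_refl _) hc r hr)
      simpa [abs_of_nonneg ht0] using this
    have b2 : ‖∫ r in t..t₀, ΛE r (f (t₀ - r))‖ ≤ M * |t - t₀| := by
      have := intervalIntegral.norm_integral_le_of_norm_le_const
        (f := fun r => ΛE r (f (t₀ - r))) (C := M) (a := t) (b := t₀) ?_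
      · rw [abs_sub_comm] at this
        exact this
      · intro r hr
        rw [uIoc_of_le hc] at hr
        have hr0 : 0 ≤ r := le_trans ht0 (le_of_lt hr.1)
        have hfr : t₀ - r ∈ Icc (0:ℝ) T := ⟨by linarith [hr.2], by linarith⟩
        calc ‖ΛE r (f (t₀ - r))‖ ≤ ‖ΛE r‖ * ‖f (t₀ - r)‖ := (ΛE r).le_opNorm _
          _ ≤ 1 * M := mul_le_mul (hE1 r hr0) (hM _ hfr) (norm_nonneg _) zero_le_one
          _ = M := one_mul _
    calc ‖_ - _‖ ≤ ε' * t + M * |t - t₀| := le_trans (norm_sub_le _ _) (add_le_add b1 b2)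
      _ < ε := by
          have := e1 t ht0 htT
          linarith


variable (c : ℝ → E →L[ℝ] E) (g : ℝ → E)

noncomputable def picard : ℕ → ℝ → E
  | 0 => g
  | (n+1) => fun t => ∫ s in (0:ℝ)..t, ΛE (t - s) (c s (picard n s))

theorem picard_cont (hE1 : ∀ r : ℝ, 0 ≤ r → ‖ΛE r‖ ≤ 1)
    (hsc : ∀ x : E, ContinuousOn (fun t => ΛE t x) (Ici 0))
    (hc : ContinuousOn c (Ici 0)) (hg : ContinuousOn g (Ici 0)) :
    ∀ n, ContinuousOn (picard ΛE c g n) (Ici 0) := by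
  intro n
  induction n with
  | zero => exact hg
  | succ n ih =>
    show ContinuousOn (fun t => ∫ s in (0:ℝ)..t, ΛE (t - s) (c s (picard ΛE c g n s))) (Ici 0)
    exact cont_int ΛE hE1 hsc (hc.clm_apply ih)

theorem picard_bound (hE1 : ∀ r : ℝ, 0 ≤ r → ‖ΛE r‖ ≤ 1)
    (hsc : ∀ x : E, ContinuousOn (fun t => ΛE t x) (Ici 0))
    (hc : ContinuousOn c (Ici 0)) (hg : ContinuousOn g (Ici 0))
    {Kc : ℝ} (hK : 0 ≤ Kc) (hcK : ∀ s : ℝ, 0 ≤ s → ‖c s‖ ≤ Kc)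
    {T C : ℝ} (hT : 0 ≤ T) (hC : 0 ≤ C) (hgb : ∀ s ∈ Icc (0:ℝ) T, ‖g s‖ ≤ C) :
    ∀ n, ∀ t ∈ Icc (0:ℝ) T, ‖picard ΛE c g n t‖ ≤ C * (Kc*t)^n / (Nat.factorial n) := by
  intro n
  induction n with
  | zero =>
    intro t ht
    simpa [picard] using hgb t ht
  | succ n ih =>
    intro t ht
    have ht0 : (0:ℝ) ≤ t := ht.1
    have hb : ∀ s ∈ Icc (0:ℝ) t, ‖c s (picard ΛE c g n s)‖ ≤
        Kc * (C * (Kc*s)^n / (Nat.factorial n)) := by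
      intro s hs
      have hs' : s ∈ Icc (0:ℝ) T := ⟨hs.1, le_trans hs.2 ht.2⟩
      calc ‖c s (picard ΛE c g n s)‖ ≤ ‖c s‖ * ‖picard ΛE c g n s‖ := (c s).le_opNorm _
        _ ≤ Kc * (C * (Kc*s)^n / (Nat.factorial n)) :=
            mul_le_mul (hcK s hs.1) (ih s hs') (norm_nonneg _) hK
    have hbint : IntervalIntegrable (fun s => Kc * (C * (Kc*s)^n / (Nat.factorial n))) volume 0 t :=
      (by fun_prop : Continuous fun s =>
        Kc * (C * (Kc*s)^n / (Nat.factorial n))).intervalIntegrable 0 t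
    have h1 : ‖picard ΛE c g (n+1) t‖ ≤
        ∫ s in (0:ℝ)..t, Kc * (C * (Kc*s)^n / (Nat.factorial n)) := by
      show ‖∫ s in (0:ℝ)..t, ΛE (t - s) (c s (picard ΛE c g n s))‖ ≤ _
      exact norm_int_le ΛE hE1 ht0 hbint hb
    have h2 : ∫ s in (0:ℝ)..t, Kc * (C * (Kc*s)^n / (Nat.factorial n)) =
        C * (Kc*t)^(n+1) / (Nat.factorial (n+1)) := by
      have e1 : (fun s => Kc * (C * (Kc*s)^n / (Nat.factorial n : ℝ))) =
          fun s => (Kc * C * Kc^n / (Nat.factorial n : ℝ)) * s^n := by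
        funext s; rw [mul_pow]; ring
      rw [e1, intervalIntegral.integral_const_mul, integral_pow,
        zero_pow (Nat.succ_ne_zero n), sub_zero]
      have hfs : ((Nat.factorial (n+1) : ℝ)) = ((n:ℝ)+1) * (Nat.factorial n : ℝ) := by
        push_cast [Nat.factorial_succ]; ring
      have hk : ((Nat.factorial n : ℝ)) ≠ 0 := Nat.cast_ne_zero.2 (Nat.factorial_ne_zero n)
      have hk1 : ((n:ℝ)+1) ≠ 0 := by positivity
      rw [hfs, mul_pow]
      field_simp
      ring
    rw [← h2]
    exact h1

theorem volterra (hE1 : ∀ r : ℝ, 0 ≤ r → ‖ΛE r‖ ≤ 1)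
    (hsc : ∀ x : E, ContinuousOn (fun t => ΛE t x) (Ici 0))
    {Kc : ℝ} (hK : 0 ≤ Kc)
    (hc : ContinuousOn c (Ici 0)) (hcK : ∀ s : ℝ, 0 ≤ s → ‖c s‖ ≤ Kc)
    (hg : ContinuousOn g (Ici 0)) :
    ∃ u : ℝ → E, ContinuousOn u (Ici 0) ∧
      ∀ t : ℝ, 0 ≤ t → u t = g t + ∫ s in (0:ℝ)..t, ΛE (t - s) (c s (u s)) := by
  set u : ℝ → E := fun t => ∑' n, picard ΛE c g n t with hu
  have hCbd : ∀ T : ℝ, 0 ≤ T → ∃ C : ℝ, 0 ≤ C ∧ ∀ s ∈ Icc (0:ℝ) T, ‖g s‖ ≤ C := by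
    intro T hT
    obtain ⟨C, hC⟩ := (isCompact_Icc (a := (0:ℝ)) (b := T)).exists_bound_of_continuousOn
      (hg.mono Icc_subset_Ici_self)
    exact ⟨C, le_trans (norm_nonneg _) (hC 0 ⟨le_refl _, hT⟩), hC⟩
  have hsummable : ∀ t : ℝ, 0 ≤ t → Summable (fun n => picard ΛE c g n t) := by
    intro t ht
    obtain ⟨C, hC0, hCb⟩ := hCbd t ht
    apply Summable.of_norm_bounded (g := fun n => C * ((Kc*t)^n / (Nat.factorial n)))
      ((Real.summable_pow_div_factorial (Kc*t)).mul_left C)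
    intro n
    have := picard_bound ΛE c g hE1 hsc hc hg hK hcK ht hC0 hCb n t ⟨ht, le_refl t⟩
    rwa [← mul_div_assoc]
  have huc : ContinuousOn u (Ici 0) := by
    intro t₀ ht₀
    have ht₀' : (0:ℝ) ≤ t₀ := mem_Ici.1 ht₀
    set T := t₀ + 1 with hT
    have hT0 : (0:ℝ) ≤ T := by linarith
    obtain ⟨C, hC0, hCb⟩ := hCbd T hT0
    have hbnd : ∀ n, ∀ t ∈ Icc (0:ℝ) T, ‖picard ΛE c g n t‖ ≤
        C * (Kc*T)^n / (Nat.factorial n) := by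
      intro n t ht
      refine le_trans (picard_bound ΛE c g hE1 hsc hc hg hK hcK hT0 hC0 hCb n t ht) ?_
      have hKt : 0 ≤ Kc * t := mul_nonneg hK ht.1
      have hle : Kc * t ≤ Kc * T := mul_le_mul_of_nonneg_left ht.2 hK
      gcongr
    have htu : TendstoUniformlyOn
        (fun N t => ∑ n ∈ Finset.range N, picard ΛE c g n t) u atTop (Icc 0 T) := by
      apply tendstoUniformlyOn_tsum_nat
        (u := fun n => C * (Kc*T)^n / (Nat.factorial n)) ?_ hbnd
      have := (Real.summable_pow_div_factorial (Kc*T)).mul_left C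
      simpa [mul_div_assoc] using this
    have hcont : ContinuousOn u (Icc 0 T) := by
      apply htu.continuousOn
      refine Filter.Frequently.of_forall fun N => ?_
      apply continuousOn_finset_sum
      intro i _
      exact (picard_cont ΛE c g hE1 hsc hc hg i).mono Icc_subset_Ici_self
    apply (hcont t₀ ⟨ht₀', by linarith⟩).mono_of_mem_nhdsWithin
    rw [mem_nhdsWithin]
    refine ⟨Iio (t₀+1), isOpen_Iio, by simp, ?_⟩
    intro s hs
    exact ⟨mem_Ici.1 hs.2, le_of_lt hs.1⟩
  refine ⟨u, huc, ?_⟩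
  intro t ht
  obtain ⟨C, hC0, hCb⟩ := hCbd t ht
  have hpb := picard_bound ΛE c g hE1 hsc hc hg hK hcK ht hC0 hCb
  set Sn : ℕ → ℝ → E := fun n s => ∑ k ∈ Finset.range n, picard ΛE c g k s with hSn
  have hSncont : ∀ n, ContinuousOn (Sn n) (Ici 0) := by
    intro n
    apply continuousOn_finset_sum
    intro i _
    exact picard_cont ΛE c g hE1 hsc hc hg i
  have hint_n : ∀ n, IntervalIntegrable
      (fun s => ΛE (t - s) (c s (Sn n s))) volume 0 t := by
    intro n
    exact intable ΛE hE1 hsc ht (hc.clm_apply (hSncont n) |>.mono Icc_subset_Ici_self)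
  have hSne : ∀ n, Sn (n+1) t = g t + ∫ s in (0:ℝ)..t, ΛE (t - s) (c s (Sn n s)) := by
    intro n
    have e1 : Sn (n+1) t = (∑ k ∈ Finset.range n, picard ΛE c g (k+1) t) + picard ΛE c g 0 t :=
      Finset.sum_range_succ' _ n
    have e2 : ∀ k, picard ΛE c g (k+1) t =
        ∫ s in (0:ℝ)..t, ΛE (t - s) (c s (picard ΛE c g k s)) := fun k => rfl
    have hik : ∀ k ∈ Finset.range n, IntervalIntegrable
        (fun s => ΛE (t - s) (c s (picard ΛE c g k s))) volume 0 t := by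
      intro k _
      exact intable ΛE hE1 hsc ht
        (hc.clm_apply (picard_cont ΛE c g hE1 hsc hc hg k) |>.mono Icc_subset_Ici_self)
    rw [e1]
    simp only [e2]
    rw [← intervalIntegral.integral_finset_sum hik]
    have e3 : ∀ s : ℝ, (∑ k ∈ Finset.range n, ΛE (t - s) (c s (picard ΛE c g k s)))
        = ΛE (t - s) (c s (Sn n s)) := by
      intro s
      rw [hSn]
      simp only [← map_sum]
    have e4 : (∫ x in (0:ℝ)..t, ∑ i ∈ Finset.range n, ΛE (t - x) (c x (picard ΛE c g i x)))
        = ∫ s in (0:ℝ)..t, ΛE (t - s) (c s (Sn n s)) :=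
      intervalIntegral.integral_congr (fun s _ => e3 s)
    rw [e4, add_comm]
    rfl
  -- limits
  have hlimS : Tendsto (fun n => Sn n t) atTop (𝓝 (u t)) :=
    (hsummable t ht).hasSum.tendsto_sum_nat
  have hlim1 : Tendsto (fun n => Sn (n+1) t) atTop (𝓝 (u t)) :=
    hlimS.comp (tendsto_add_atTop_nat 1)
  have hucc : ContinuousOn u (Icc 0 t) := huc.mono Icc_subset_Ici_self
  have hlim2 : Tendsto (fun n => ∫ s in (0:ℝ)..t, ΛE (t - s) (c s (Sn n s))) atTop
      (𝓝 (∫ s in (0:ℝ)..t, ΛE (t - s) (c s (u s)))) := by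
    apply intervalIntegral.tendsto_integral_filter_of_dominated_convergence
      (bound := fun _ => Kc * (C * Real.exp (Kc * t)))
    · filter_upwards with n
      exact ((cont_kernel ΛE hE1 hsc ht (hc.clm_apply (hSncont n)
        |>.mono Icc_subset_Ici_self)).mono
        (by rw [uIoc_of_le ht]; exact Ioc_subset_Icc_self)).aestronglyMeasurable
        measurableSet_uIoc
    · filter_upwards with n
      filter_upwards with s
      intro hs
      rw [uIoc_of_le ht] at hs
      have hs' : s ∈ Icc (0:ℝ) t := ⟨le_of_lt hs.1, hs.2⟩
      have hsum_bound : ‖Sn n s‖ ≤ C * Real.exp (Kc * s) := by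
        have hsummb : Summable (fun k : ℕ => C * (Kc*s)^k / (Nat.factorial k)) := by
          have := (Real.summable_pow_div_factorial (Kc*s)).mul_left C
          simpa [mul_div_assoc] using this
        have h1 : ‖Sn n s‖ ≤ ∑ k ∈ Finset.range n, C * (Kc*s)^k / (Nat.factorial k) := by
          refine le_trans (norm_sum_le _ _) (Finset.sum_le_sum ?_)
          intro k _
          exact hpb k s hs'
        have h2 : (∑ k ∈ Finset.range n, C * (Kc*s)^k / (Nat.factorial k)) ≤
            ∑' k, C * (Kc*s)^k / (Nat.factorial k) := by
          apply hsummb.sum_le_tsum _ (fun k _ => ?_)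
          exact div_nonneg (mul_nonneg hC0 (pow_nonneg (mul_nonneg hK hs'.1) k))
            (Nat.cast_nonneg _)
        have h3 : (∑' k, C * (Kc*s)^k / (Nat.factorial k)) = C * Real.exp (Kc*s) := by
          rw [tsum_congr (fun k => by rw [mul_div_assoc] :
            ∀ k : ℕ, C * (Kc*s)^k / (Nat.factorial k) = C * ((Kc*s)^k / (Nat.factorial k))),
            tsum_mul_left]
          congr 1
          rw [Real.exp_eq_exp_ℝ]
          exact (NormedSpace.expSeries_div_hasSum_exp (Kc*s)).tsum_eq
        linarith
      calc ‖ΛE (t - s) (c s (Sn n s))‖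
          ≤ ‖ΛE (t - s)‖ * ‖c s (Sn n s)‖ := (ΛE (t - s)).le_opNorm _
        _ ≤ 1 * (Kc * ‖Sn n s‖) := by
            apply mul_le_mul (hE1 _ (by linarith [hs'.2]))
              (le_trans ((c s).le_opNorm _)
                (mul_le_mul_of_nonneg_right (hcK s hs'.1) (norm_nonneg _)))
              (norm_nonneg _) zero_le_one
        _ = Kc * ‖Sn n s‖ := one_mul _
        _ ≤ Kc * (C * Real.exp (Kc * s)) := mul_le_mul_of_nonneg_left hsum_bound hK
        _ ≤ Kc * (C * Real.exp (Kc * t)) := by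
            have hee : Real.exp (Kc*s) ≤ Real.exp (Kc*t) :=
              Real.exp_le_exp.2 (mul_le_mul_of_nonneg_left hs'.2 hK)
            exact mul_le_mul_of_nonneg_left (mul_le_mul_of_nonneg_left hee hC0) hK
    · exact intervalIntegrable_const
    · filter_upwards with s
      intro hs
      rw [uIoc_of_le ht] at hs
      have hs' : s ∈ Icc (0:ℝ) t := ⟨le_of_lt hs.1, hs.2⟩
      have h1 : Tendsto (fun n => Sn n s) atTop (𝓝 (u s)) :=
        (hsummable s hs'.1).hasSum.tendsto_sum_nat
      exact ((ΛE (t - s)).continuous.tendsto _).comp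
        (((c s).continuous.tendsto _).comp h1)
  have hlim3 : Tendsto (fun n => Sn (n+1) t) atTop
      (𝓝 (g t + ∫ s in (0:ℝ)..t, ΛE (t - s) (c s (u s)))) := by
    rw [show (fun n => Sn (n+1) t) = fun n =>
      g t + ∫ s in (0:ℝ)..t, ΛE (t - s) (c s (Sn n s)) from funext hSne]
    exact hlim2.const_add (g t)
  exact tendsto_nhds_unique hlim1 hlim3

theorem int_sub (hE1 : ∀ r : ℝ, 0 ≤ r → ‖ΛE r‖ ≤ 1)
    (hsc : ∀ x : E, ContinuousOn (fun t => ΛE t x) (Ici 0))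
    {t : ℝ} (ht : 0 ≤ t) {f₁ f₂ : ℝ → E}
    (h₁ : ContinuousOn f₁ (Icc 0 t)) (h₂ : ContinuousOn f₂ (Icc 0 t)) :
    (∫ s in (0:ℝ)..t, ΛE (t - s) (f₁ s)) - ∫ s in (0:ℝ)..t, ΛE (t - s) (f₂ s)
      = ∫ s in (0:ℝ)..t, ΛE (t - s) (f₁ s - f₂ s) := by
  rw [← intervalIntegral.integral_sub (intable ΛE hE1 hsc ht h₁) (intable ΛE hE1 hsc ht h₂)]
  apply intervalIntegral.integral_congr
  intro s _
  simp [map_sub]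

theorem int_add (hE1 : ∀ r : ℝ, 0 ≤ r → ‖ΛE r‖ ≤ 1)
    (hsc : ∀ x : E, ContinuousOn (fun t => ΛE t x) (Ici 0))
    {t : ℝ} (ht : 0 ≤ t) {f₁ f₂ : ℝ → E}
    (h₁ : ContinuousOn f₁ (Icc 0 t)) (h₂ : ContinuousOn f₂ (Icc 0 t)) :
    (∫ s in (0:ℝ)..t, ΛE (t - s) (f₁ s)) + ∫ s in (0:ℝ)..t, ΛE (t - s) (f₂ s)
      = ∫ s in (0:ℝ)..t, ΛE (t - s) (f₁ s + f₂ s) := by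
  rw [← intervalIntegral.integral_add (intable ΛE hE1 hsc ht h₁) (intable ΛE hE1 hsc ht h₂)]
  apply intervalIntegral.integral_congr
  intro s _
  simp [map_add]

theorem int_sub3 (hE1 : ∀ r : ℝ, 0 ≤ r → ‖ΛE r‖ ≤ 1)
    (hsc : ∀ x : E, ContinuousOn (fun t => ΛE t x) (Ici 0))
    {t : ℝ} (ht : 0 ≤ t) {f₁ f₂ f₃ : ℝ → E}
    (h₁ : ContinuousOn f₁ (Icc 0 t)) (h₂ : ContinuousOn f₂ (Icc 0 t))
    (h₃ : ContinuousOn f₃ (Icc 0 t)) :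
    (∫ s in (0:ℝ)..t, ΛE (t - s) (f₁ s)) - (∫ s in (0:ℝ)..t, ΛE (t - s) (f₂ s))
      - ∫ s in (0:ℝ)..t, ΛE (t - s) (f₃ s)
      = ∫ s in (0:ℝ)..t, ΛE (t - s) (f₁ s - f₂ s - f₃ s) := by
  rw [int_sub ΛE hE1 hsc ht h₁ h₂, int_sub ΛE hE1 hsc ht (show ContinuousOn (fun s => f₁ s - f₂ s) (Icc 0 t) from h₁.sub h₂) h₃]

theorem int_sub4 (hE1 : ∀ r : ℝ, 0 ≤ r → ‖ΛE r‖ ≤ 1)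
    (hsc : ∀ x : E, ContinuousOn (fun t => ΛE t x) (Ici 0))
    {t : ℝ} (ht : 0 ≤ t) {f₁ f₂ f₃ f₄ : ℝ → E}
    (h₁ : ContinuousOn f₁ (Icc 0 t)) (h₂ : ContinuousOn f₂ (Icc 0 t))
    (h₃ : ContinuousOn f₃ (Icc 0 t)) (h₄ : ContinuousOn f₄ (Icc 0 t)) :
    (∫ s in (0:ℝ)..t, ΛE (t - s) (f₁ s)) - (∫ s in (0:ℝ)..t, ΛE (t - s) (f₂ s))
      - (∫ s in (0:ℝ)..t, ΛE (t - s) (f₃ s)) - ∫ s in (0:ℝ)..t, ΛE (t - s) (f₄ s)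
      = ∫ s in (0:ℝ)..t, ΛE (t - s) (f₁ s - f₂ s - f₃ s - f₄ s) := by
  rw [int_sub3 ΛE hE1 hsc ht h₁ h₂ h₃, int_sub ΛE hE1 hsc ht (show ContinuousOn (fun s => f₁ s - f₂ s - f₃ s) (Icc 0 t) from (h₁.sub h₂).sub h₃) h₄]

theorem apriori (hE1 : ∀ r : ℝ, 0 ≤ r → ‖ΛE r‖ ≤ 1)
    {v q g₀ : ℝ → E} {T C D Kc : ℝ} (hT : 0 ≤ T) (hC : 0 ≤ C) (hD : 0 ≤ D) (hK : 0 ≤ Kc)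
    (hv : ContinuousOn v (Icc 0 T)) (hq : ContinuousOn q (Icc 0 T))
    (hg : ∀ t ∈ Icc (0:ℝ) T, ‖g₀ t‖ ≤ C)
    (heq : ∀ t ∈ Icc (0:ℝ) T, v t = g₀ t + ∫ s in (0:ℝ)..t, ΛE (t - s) (q s))
    (hqb : ∀ s ∈ Icc (0:ℝ) T, ‖q s‖ ≤ Kc * ‖v s‖ + D) :
    ∀ t ∈ Icc (0:ℝ) T, ‖v t‖ ≤ (C + D * T) * Real.exp (Kc * t) := by
  apply gronwall hT (by nlinarith) hK hv.norm
  intro t htm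
  have ht0 : (0:ℝ) ≤ t := htm.1
  have hvt : ContinuousOn v (Icc 0 t) := hv.mono (Icc_subset_Icc_right htm.2)
  have hbint : IntervalIntegrable (fun s => Kc * ‖v s‖ + D) volume 0 t := by
    apply ContinuousOn.intervalIntegrable
    rw [uIcc_of_le ht0]
    exact (continuousOn_const.mul hvt.norm).add continuousOn_const
  have hvint : IntervalIntegrable (fun s => ‖v s‖) volume 0 t := by
    apply ContinuousOn.intervalIntegrable
    rw [uIcc_of_le ht0]
    exact hvt.norm
  calc ‖v t‖ ≤ ‖g₀ t‖ + ‖∫ s in (0:ℝ)..t, ΛE (t - s) (q s)‖ := by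
        rw [heq t htm]; exact norm_add_le _ _
    _ ≤ C + ∫ s in (0:ℝ)..t, (Kc * ‖v s‖ + D) := by
        apply add_le_add (hg t htm)
        apply norm_int_le ΛE hE1 ht0 hbint
        intro s hs
        exact hqb s ⟨hs.1, le_trans hs.2 htm.2⟩
    _ = C + (Kc * (∫ s in (0:ℝ)..t, ‖v s‖) + D * t) := by
        rw [intervalIntegral.integral_add (hvint.const_mul Kc) intervalIntegrable_const,
          intervalIntegral.integral_const_mul, intervalIntegral.integral_const]
        simp [smul_eq_mul, mul_comm]
    _ ≤ (C + D * T) + Kc * ∫ s in (0:ℝ)..t, ‖v s‖ := by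
        have : D * t ≤ D * T := mul_le_mul_of_nonneg_left htm.2 hD
        linarith

theorem littleo_of_sq {F G : Type*} [NormedAddCommGroup F] [NormedSpace ℝ F]
    [NormedAddCommGroup G] [NormedSpace ℝ G]
    {f : F → G} {C : ℝ} (hC : 0 ≤ C) (h : ∀ x, ‖f x‖ ≤ C * ‖x‖^2) :
    f =o[𝓝 0] (fun x : F => x) := by
  rw [Asymptotics.isLittleO_iff]
  intro ε hε
  rw [Metric.eventually_nhds_iff]
  refine ⟨ε / (C+1), by positivity, ?_⟩
  intro x hx
  rw [dist_zero_right] at hx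
  calc ‖f x‖ ≤ C * ‖x‖^2 := h x
    _ ≤ ε * ‖x‖ := by
        have h1 : ‖x‖ * (C+1) < ε := by
          rwa [lt_div_iff₀ (by positivity)] at hx
        have h2 : ‖x‖ * (‖x‖ * (C+1)) ≤ ‖x‖ * ε :=
          mul_le_mul_of_nonneg_left h1.le (norm_nonneg x)
        nlinarith [norm_nonneg x, sq_nonneg ‖x‖]

theorem taylor_bound {F G : Type*} [NormedAddCommGroup F] [NormedSpace ℝ F]
    [NormedAddCommGroup G] [NormedSpace ℝ G]
    {f : F → G} {Kc : ℝ} (hK0 : 0 ≤ Kc) (hd : Differentiable ℝ f)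
    (hlip : ∀ a b : F, ‖fderiv ℝ f b - fderiv ℝ f a‖ ≤ Kc * ‖b - a‖)
    (a b : F) : ‖f b - f a - fderiv ℝ f a (b - a)‖ ≤ Kc * ‖b - a‖^2 := by
  set v := b - a with hv
  set g : ℝ → G := fun u => f (a + u • v) - u • (fderiv ℝ f a v) with hgdef
  have hg : ∀ u : ℝ, HasDerivAt g (fderiv ℝ f (a + u • v) v - fderiv ℝ f a v) u := by
    intro u
    have h1 : HasDerivAt (fun u : ℝ => a + u • v) v u := by
      simpa using ((hasDerivAt_id u).smul_const v).const_add a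
    have h2 : HasDerivAt (fun u : ℝ => f (a + u • v)) (fderiv ℝ f (a + u • v) v) u :=
      (hd _).hasFDerivAt.comp_hasDerivAt u h1
    have h3 : HasDerivAt (fun u : ℝ => u • (fderiv ℝ f a v)) (fderiv ℝ f a v) u := by
      simpa using (hasDerivAt_id u).smul_const (fderiv ℝ f a v)
    exact h2.sub h3
  have hbound : ∀ u ∈ Ico (0:ℝ) 1, ‖fderiv ℝ f (a + u • v) v - fderiv ℝ f a v‖ ≤ Kc * ‖v‖^2 := by
    intro u hu
    calc ‖fderiv ℝ f (a + u • v) v - fderiv ℝ f a v‖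
        = ‖(fderiv ℝ f (a + u • v) - fderiv ℝ f a) v‖ := by
          rw [ContinuousLinearMap.sub_apply]
      _ ≤ ‖fderiv ℝ f (a + u • v) - fderiv ℝ f a‖ * ‖v‖ :=
          (fderiv ℝ f (a + u • v) - fderiv ℝ f a).le_opNorm v
      _ ≤ (Kc * ‖(a + u • v) - a‖) * ‖v‖ :=
          mul_le_mul_of_nonneg_right (hlip a (a + u • v)) (norm_nonneg v)
      _ = Kc * (u * ‖v‖) * ‖v‖ := by
          rw [add_sub_cancel_left, norm_smul, Real.norm_eq_abs, abs_of_nonneg hu.1]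
      _ ≤ Kc * (1 * ‖v‖) * ‖v‖ := by
          have := hu.2.le
          have h5 : u * ‖v‖ ≤ 1 * ‖v‖ := mul_le_mul_of_nonneg_right this (norm_nonneg v)
          nlinarith [norm_nonneg v, mul_le_mul_of_nonneg_left h5 hK0]
      _ = Kc * ‖v‖^2 := by ring
  have key := norm_image_sub_le_of_norm_deriv_le_segment'
    (f := g) (f' := fun u => fderiv ℝ f (a + u • v) v - fderiv ℝ f a v) (C := Kc * ‖v‖^2)
    (fun u _ => (hg u).hasDerivWithinAt) hbound 1 (right_mem_Icc.2 zero_le_one)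
  have hg1 : g 1 = f b - fderiv ℝ f a v := by
    simp [hgdef, hv]
  have hg0 : g 0 = f a := by simp [hgdef]
  rw [hg1, hg0] at key
  have e : f b - fderiv ℝ f a v - f a = f b - f a - fderiv ℝ f a (b - a) := by
    rw [← hv]; abel
  rw [e] at key
  calc ‖f b - f a - fderiv ℝ f a (b - a)‖ ≤ Kc * ‖v‖^2 * (1 - 0) := key
    _ = Kc * ‖b - a‖^2 := by rw [← hv]; ring

end Stmt2Aux

open Stmt2Aux

theorem stmt_2
    {H : Type} [NormedAddCommGroup H] [InnerProductSpace ℝ H]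
    [TopologicalSpace.SeparableSpace H]
    {E : Type} [NormedAddCommGroup E] [NormedSpace ℝ E] [CompleteSpace E]
    (ι : E →L[ℝ] H) (hι : Function.Injective ι)
    (N : E → E) (hN : ContDiff ℝ 3 N)
    (K : ℝ)
    (hN1 : ∀ x : E, ‖fderiv ℝ N x‖ ≤ K)
    (hN2 : ∀ x : E, ‖fderiv ℝ (fderiv ℝ N) x‖ ≤ K)
    (hN3 : ∀ x : E, ‖fderiv ℝ (fderiv ℝ (fderiv ℝ N)) x‖ ≤ K)
    (Λ : ℝ → H →L[ℝ] H) (ΛE : ℝ → E →L[ℝ] E)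
    (hcompat : ∀ (t : ℝ) (x : E), ι (ΛE t x) = Λ t (ι x))
    (hΛ0 : Λ 0 = ContinuousLinearMap.id ℝ H)
    (hΛadd : ∀ s t : ℝ, 0 ≤ s → 0 ≤ t → Λ (s + t) = (Λ s).comp (Λ t))
    (hΛE0 : ΛE 0 = ContinuousLinearMap.id ℝ E)
    (hΛEadd : ∀ s t : ℝ, 0 ≤ s → 0 ≤ t → ΛE (s + t) = (ΛE s).comp (ΛE t))
    (hstrong : ∀ x : H, ContinuousOn (fun t => Λ t x) (Set.Ici (0:ℝ)))
    (hstrongE : ∀ x : E, ContinuousOn (fun t => ΛE t x) (Set.Ici (0:ℝ)))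
    (ω : ℝ) (hω : ω < 0)
    (hΛbound : ∀ t : ℝ, 0 ≤ t → max ‖Λ t‖ ‖ΛE t‖ ≤ Real.exp (ω * t))
    (φ : ℝ → E → E)
    (hφcont : ∀ x : E, ContinuousOn (fun t => φ t x) (Set.Ici (0:ℝ)))
    (hφ : ∀ x : E, ∀ t : ℝ, 0 ≤ t →
      φ t x = ΛE t x + ∫ s in (0:ℝ)..t, ΛE (t - s) (N (φ s x)))
    :
    ∀ x₀ y z : E, ∃ a : ℝ → E,
      (a 0 = 0 ∧ ContinuousOn a (Set.Ici 0) ∧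
        ∀ t : ℝ, 0 ≤ t →
          a t = ∫ s in (0:ℝ)..t, ΛE (t - s)
            (fderiv ℝ N (φ s x₀) (a s) +
              fderiv ℝ (fderiv ℝ N) (φ s x₀) (fderiv ℝ (φ s) x₀ y) (fderiv ℝ (φ s) x₀ z))) ∧
      (∀ a' : ℝ → E,
        (a' 0 = 0 ∧ ContinuousOn a' (Set.Ici 0) ∧
          ∀ t : ℝ, 0 ≤ t →
            a' t = ∫ s in (0:ℝ)..t, ΛE (t - s)
              (fderiv ℝ N (φ s x₀) (a' s) +
                fderiv ℝ (fderiv ℝ N) (φ s x₀) (fderiv ℝ (φ s) x₀ y) (fderiv ℝ (φ s) x₀ z))) →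
        ∀ t : ℝ, 0 ≤ t → a' t = a t) ∧
      ∀ t : ℝ, 0 ≤ t →
        (∀ᶠ x in nhds x₀, DifferentiableAt ℝ (φ t) x) ∧
        ∃ L : E →L[ℝ] E →L[ℝ] E,
          HasFDerivAt (fderiv ℝ (φ t)) L x₀ ∧ L y z = a t := by
  intro x₀ y z
  -- basic facts
  have hK0 : (0:ℝ) ≤ K := le_trans (norm_nonneg _) (hN1 0)
  have hE1 : ∀ r : ℝ, 0 ≤ r → ‖ΛE r‖ ≤ 1 := by
    intro r hr
    refine le_trans (le_trans (le_max_right _ _) (hΛbound r hr)) ?_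
    rw [Real.exp_le_one_iff]
    exact mul_nonpos_of_nonpos_of_nonneg hω.le hr
  have hNd : Differentiable ℝ N := hN.differentiable (by norm_num)
  have hDN2 : ContDiff ℝ 2 (fderiv ℝ N) := hN.fderiv_right (by norm_num)
  have hDNd : Differentiable ℝ (fderiv ℝ N) := hDN2.differentiable (by norm_num)
  have hDNc : Continuous (fderiv ℝ N) := hDN2.continuous
  have hD2N1 : ContDiff ℝ 1 (fderiv ℝ (fderiv ℝ N)) := hDN2.fderiv_right (by norm_num)
  have hD2Nd : Differentiable ℝ (fderiv ℝ (fderiv ℝ N)) := hD2N1.differentiable (by norm_num)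
  have hD2Nc : Continuous (fderiv ℝ (fderiv ℝ N)) := hD2N1.continuous
  have hNlip : ∀ a b : E, ‖N b - N a‖ ≤ K * ‖b - a‖ := fun a b =>
    convex_univ.norm_image_sub_le_of_norm_fderiv_le (fun x _ => hNd x)
      (fun x _ => hN1 x) (mem_univ a) (mem_univ b)
  have hDNlip : ∀ a b : E, ‖fderiv ℝ N b - fderiv ℝ N a‖ ≤ K * ‖b - a‖ := fun a b =>
    convex_univ.norm_image_sub_le_of_norm_fderiv_le (fun x _ => hDNd x)
      (fun x _ => hN2 x) (mem_univ a) (mem_univ b)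
  have hD2Nlip : ∀ a b : E, ‖fderiv ℝ (fderiv ℝ N) b - fderiv ℝ (fderiv ℝ N) a‖ ≤ K * ‖b - a‖ :=
    fun a b => convex_univ.norm_image_sub_le_of_norm_fderiv_le (fun x _ => hD2Nd x)
      (fun x _ => hN3 x) (mem_univ a) (mem_univ b)
  have hNtay : ∀ a b : E, ‖N b - N a - fderiv ℝ N a (b - a)‖ ≤ K * ‖b - a‖^2 :=
    taylor_bound hK0 hNd hDNlip
  have hDNtay : ∀ a b : E,
      ‖fderiv ℝ N b - fderiv ℝ N a - fderiv ℝ (fderiv ℝ N) a (b - a)‖ ≤ K * ‖b - a‖^2 :=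
    taylor_bound hK0 hDNd hD2Nlip
  -- continuity abbreviations
  have hφC : ∀ (x : E) (t : ℝ), ContinuousOn (fun s => φ s x) (Icc 0 t) :=
    fun x t => (hφcont x).mono Icc_subset_Ici_self
  have hNφC : ∀ (x : E) (t : ℝ), ContinuousOn (fun s => N (φ s x)) (Icc 0 t) := by
    intro x t
    exact hN.continuous.comp_continuousOn (hφC x t)
  have hNφI : ∀ (x : E), ContinuousOn (fun s => N (φ s x)) (Ici 0) := by
    intro x
    exact hN.continuous.comp_continuousOn (hφcont x)
  have hcC : ∀ x : E, ContinuousOn (fun s => fderiv ℝ N (φ s x)) (Ici 0) :=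
    fun x => hDNc.comp_continuousOn (hφcont x)
  have hcB : ∀ (x : E) (s : ℝ), 0 ≤ s → ‖fderiv ℝ N (φ s x)‖ ≤ K := fun x s _ => hN1 _
  -- Lipschitz estimate for the flow
  have hφlip : ∀ (x h : E) (t : ℝ), 0 ≤ t → ‖φ t (x+h) - φ t x‖ ≤ ‖h‖ * Real.exp (K*t) := by
    intro x h t ht
    have hv : ContinuousOn (fun τ => φ τ (x+h) - φ τ x) (Icc 0 t) :=
      (hφC (x+h) t).sub (hφC x t)
    have hq : ContinuousOn (fun s => N (φ s (x+h)) - N (φ s x)) (Icc 0 t) :=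
      (hNφC (x+h) t).sub (hNφC x t)
    have heq : ∀ τ ∈ Icc (0:ℝ) t, φ τ (x+h) - φ τ x
        = ΛE τ h + ∫ s in (0:ℝ)..τ, ΛE (τ - s) (N (φ s (x+h)) - N (φ s x)) := by
      intro τ hτ
      rw [hφ (x+h) τ hτ.1, hφ x τ hτ.1]
      rw [show ∀ A B I1 I2 : E, (A + I1) - (B + I2) = (A - B) + (I1 - I2) from
        fun A B I1 I2 => by abel]
      rw [int_sub ΛE hE1 hstrongE hτ.1 (hNφC (x+h) τ) (hNφC x τ),
        ← map_sub (ΛE τ), add_sub_cancel_left]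
    have key := apriori ΛE hE1 (C := ‖h‖) (D := 0) (Kc := K) ht (norm_nonneg h) le_rfl hK0
      hv hq ?_ heq ?_
    · have h2 := key t ⟨ht, le_refl t⟩
      calc ‖φ t (x+h) - φ t x‖ = ‖(fun τ => φ τ (x+h) - φ τ x) t‖ := rfl
        _ ≤ (‖h‖ + 0 * t) * Real.exp (K*t) := h2
        _ = ‖h‖ * Real.exp (K*t) := by ring
    · intro τ hτ
      calc ‖ΛE τ h‖ ≤ ‖ΛE τ‖ * ‖h‖ := (ΛE τ).le_opNorm h
        _ ≤ 1 * ‖h‖ := mul_le_mul_of_nonneg_right (hE1 τ hτ.1) (norm_nonneg h)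
        _ = ‖h‖ := one_mul _
    · intro s hs
      have h3 := hNlip (φ s x) (φ s (x+h))
      simpa using h3
  -- first variation
  have hvolt := fun (x yy : E) => volterra ΛE (fun s => fderiv ℝ N (φ s x)) (fun τ => ΛE τ yy)
    hE1 hstrongE hK0 (hcC x) (hcB x) (hstrongE yy)
  choose w hwc hwe using hvolt
  have hwC : ∀ (x yy : E) (t : ℝ), ContinuousOn (w x yy) (Icc 0 t) :=
    fun x yy t => (hwc x yy).mono Icc_subset_Ici_self
  have hqwC : ∀ (x x' yy : E) (t : ℝ),
      ContinuousOn (fun s => fderiv ℝ N (φ s x) (w x' yy s)) (Icc 0 t) := by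
    intro x x' yy t
    exact ((hcC x).mono Icc_subset_Ici_self).clm_apply (hwC x' yy t)
  have hqb0 : ∀ (x : E) (v : ℝ → E) (s : ℝ), ‖fderiv ℝ N (φ s x) (v s)‖ ≤ K * ‖v s‖ := by
    intro x v s
    exact le_trans ((fderiv ℝ N (φ s x)).le_opNorm _)
      (mul_le_mul_of_nonneg_right (hN1 _) (norm_nonneg _))
  have hΛEb : ∀ (τ : ℝ) (u : E), 0 ≤ τ → ‖ΛE τ u‖ ≤ ‖u‖ := by
    intro τ u hτ
    calc ‖ΛE τ u‖ ≤ ‖ΛE τ‖ * ‖u‖ := (ΛE τ).le_opNorm u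
      _ ≤ 1 * ‖u‖ := mul_le_mul_of_nonneg_right (hE1 τ hτ) (norm_nonneg u)
      _ = ‖u‖ := one_mul _
  have hwb : ∀ (x yy : E) (t : ℝ), 0 ≤ t → ‖w x yy t‖ ≤ ‖yy‖ * Real.exp (K*t) := by
    intro x yy t ht
    have key := apriori ΛE hE1 (C := ‖yy‖) (D := 0) (Kc := K) ht (norm_nonneg yy) le_rfl hK0
      (hwC x yy t) (hqwC x x yy t) (fun τ hτ => hΛEb τ yy hτ.1)
      (fun τ hτ => hwe x yy τ hτ.1) (fun s hs => by
        have h4 := hqb0 x (w x yy) s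
        simpa using h4)
    calc ‖w x yy t‖ ≤ (‖yy‖ + 0*t) * Real.exp (K*t) := key t ⟨ht, le_refl t⟩
      _ = ‖yy‖ * Real.exp (K*t) := by ring
  -- homogeneous uniqueness
  have huniq0 : ∀ (x : E) (v : ℝ → E), ContinuousOn v (Ici 0) →
      (∀ t : ℝ, 0 ≤ t → v t = ∫ s in (0:ℝ)..t, ΛE (t - s) (fderiv ℝ N (φ s x) (v s))) →
      ∀ t : ℝ, 0 ≤ t → v t = 0 := by
    intro x v hvc hveq t ht
    have hqc : ContinuousOn (fun s => fderiv ℝ N (φ s x) (v s)) (Icc 0 t) :=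
      ((hcC x).mono Icc_subset_Ici_self).clm_apply (hvc.mono Icc_subset_Ici_self)
    have key := apriori ΛE hE1 (C := 0) (D := 0) (Kc := K) (g₀ := fun _ => (0:E))
      ht le_rfl le_rfl hK0
      (hvc.mono Icc_subset_Ici_self) hqc (fun τ _ => by simp)
      (fun τ hτ => by rw [hveq τ hτ.1, zero_add])
      (fun s hs => by
        have h4 := hqb0 x v s
        simpa using h4)
    have h2 := key t ⟨ht, le_refl t⟩
    have h3 : ‖v t‖ ≤ 0 := by
      calc ‖v t‖ ≤ (0 + 0*t)*Real.exp (K*t) := h2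
        _ = 0 := by ring
    simpa [norm_le_zero_iff] using h3
  -- linearity of w in the direction
  have hwadd : ∀ (x u u' : E) (t : ℝ), 0 ≤ t → w x (u + u') t = w x u t + w x u' t := by
    intro x u u' t ht
    have hdiff0 := huniq0 x (fun τ => w x (u+u') τ - w x u τ - w x u' τ)
      (((hwc x (u+u')).sub (hwc x u)).sub (hwc x u')) ?_ t ht
    · have h2 : w x (u+u') t - (w x u t + w x u' t) = 0 := by
        rw [← sub_sub]; exact hdiff0
      exact sub_eq_zero.mp h2
    · intro τ hτ
      show w x (u+u') τ - w x u τ - w x u' τ = ∫ s in (0:ℝ)..τ,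
        ΛE (τ - s) (fderiv ℝ N (φ s x) (w x (u+u') s - w x u s - w x u' s))
      rw [hwe x (u+u') τ hτ, hwe x u τ hτ, hwe x u' τ hτ]
      rw [show ∀ A1 A2 A3 I1 I2 I3 : E, (A1+I1) - (A2+I2) - (A3+I3)
        = (A1 - A2 - A3) + (I1 - I2 - I3) from fun _ _ _ _ _ _ => by abel]
      rw [int_sub3 ΛE hE1 hstrongE hτ (hqwC x x (u+u') τ) (hqwC x x u τ) (hqwC x x u' τ)]
      have e0 : ΛE τ (u+u') - ΛE τ u - ΛE τ u' = 0 := by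
        rw [← map_sub, ← map_sub, show u + u' - u - u' = (0:E) from by abel, map_zero]
      rw [e0, zero_add]
      apply intervalIntegral.integral_congr
      intro s _
      simp [map_sub]
  have hwsmul : ∀ (x u : E) (r : ℝ) (t : ℝ), 0 ≤ t → w x (r • u) t = r • w x u t := by
    intro x u r t ht
    have hdiff0 := huniq0 x (fun τ => w x (r • u) τ - r • w x u τ)
      ((hwc x (r • u)).sub ((hwc x u).const_smul r)) ?_ t ht
    · exact sub_eq_zero.mp hdiff0
    · intro τ hτ
      show w x (r • u) τ - r • w x u τ = ∫ s in (0:ℝ)..τ,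
        ΛE (τ - s) (fderiv ℝ N (φ s x) (w x (r • u) s - r • w x u s))
      rw [hwe x (r • u) τ hτ, hwe x u τ hτ]
      rw [smul_add, show ∀ A1 A2 I1 I2 : E, (A1+I1) - (A2+I2) = (A1 - A2) + (I1 - I2) from
        fun _ _ _ _ => by abel]
      have e0 : ΛE τ (r • u) - r • ΛE τ u = 0 := by
        rw [_root_.map_smul, sub_self]
      have e2 : r • (∫ s in (0:ℝ)..τ, ΛE (τ - s) (fderiv ℝ N (φ s x) (w x u s)))
          = ∫ s in (0:ℝ)..τ, ΛE (τ - s) (fderiv ℝ N (φ s x) (r • w x u s)) := by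
        rw [← intervalIntegral.integral_smul]
        apply intervalIntegral.integral_congr
        intro s _
        simp [_root_.map_smul]
      rw [e0, zero_add, e2]
      rw [int_sub ΛE hE1 hstrongE hτ (hqwC x x (r • u) τ)
        (((hcC x).mono Icc_subset_Ici_self).clm_apply (show ContinuousOn (fun s => r • w x u s) (Icc 0 τ) from (hwC x u τ).const_smul r))]
      apply intervalIntegral.integral_congr
      intro s _
      simp [map_sub]
  -- remainder estimate for the first derivative
  have hfd : ∀ (x h : E) (t : ℝ), 0 ≤ t →
      ‖φ t (x+h) - φ t x - w x h t‖ ≤ K * t * (Real.exp (K*t))^3 * ‖h‖^2 := by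
    intro x h t ht
    set D : ℝ := K * (Real.exp (K*t))^2 * ‖h‖^2 with hD
    have hD0 : 0 ≤ D := by positivity
    have hvc : ContinuousOn (fun τ => φ τ (x+h) - φ τ x - w x h τ) (Icc 0 t) :=
      ((hφC (x+h) t).sub (hφC x t)).sub (hwC x h t)
    have hqc : ContinuousOn
        (fun s => N (φ s (x+h)) - N (φ s x) - fderiv ℝ N (φ s x) (w x h s)) (Icc 0 t) :=
      ((hNφC (x+h) t).sub (hNφC x t)).sub (hqwC x x h t)
    have heq : ∀ τ ∈ Icc (0:ℝ) t, (fun τ => φ τ (x+h) - φ τ x - w x h τ) τ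
        = (0:E) + ∫ s in (0:ℝ)..τ,
            ΛE (τ - s) (N (φ s (x+h)) - N (φ s x) - fderiv ℝ N (φ s x) (w x h s)) := by
      intro τ hτ
      show φ τ (x+h) - φ τ x - w x h τ = _
      rw [hφ (x+h) τ hτ.1, hφ x τ hτ.1, hwe x h τ hτ.1]
      rw [show ∀ A1 A2 A3 I1 I2 I3 : E, (A1+I1) - (A2+I2) - (A3+I3)
        = (A1 - A2 - A3) + (I1 - I2 - I3) from fun _ _ _ _ _ _ => by abel]
      rw [int_sub3 ΛE hE1 hstrongE hτ.1 (hNφC (x+h) τ) (hNφC x τ) (hqwC x x h τ)]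
      congr 1
      rw [← map_sub, ← map_sub, show x + h - x - h = (0:E) from by abel, map_zero]
    have hqb : ∀ s ∈ Icc (0:ℝ) t,
        ‖N (φ s (x+h)) - N (φ s x) - fderiv ℝ N (φ s x) (w x h s)‖
        ≤ K * ‖φ s (x+h) - φ s x - w x h s‖ + D := by
      intro s hs
      have hdec : N (φ s (x+h)) - N (φ s x) - fderiv ℝ N (φ s x) (w x h s)
          = (N (φ s (x+h)) - N (φ s x) - fderiv ℝ N (φ s x) (φ s (x+h) - φ s x))
            + fderiv ℝ N (φ s x) (φ s (x+h) - φ s x - w x h s) := by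
        simp only [map_sub]
        abel
      rw [hdec]
      refine le_trans (norm_add_le _ _) ?_
      have h1 : ‖N (φ s (x+h)) - N (φ s x) - fderiv ℝ N (φ s x) (φ s (x+h) - φ s x)‖ ≤ D := by
        have ht1 := hNtay (φ s x) (φ s (x+h))
        have hlip := hφlip x h s hs.1
        have hexp : Real.exp (K*s) ≤ Real.exp (K*t) :=
          Real.exp_le_exp.2 (mul_le_mul_of_nonneg_left hs.2 hK0)
        calc ‖N (φ s (x+h)) - N (φ s x) - fderiv ℝ N (φ s x) (φ s (x+h) - φ s x)‖
            ≤ K * ‖φ s (x+h) - φ s x‖^2 := ht1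
          _ ≤ K * (‖h‖ * Real.exp (K*s))^2 := by
              apply mul_le_mul_of_nonneg_left ?_ hK0
              exact pow_le_pow_left₀ (norm_nonneg _) hlip 2
          _ ≤ D := by
              rw [hD]
              have h6 : (Real.exp (K*s))^2 ≤ (Real.exp (K*t))^2 :=
                pow_le_pow_left₀ (Real.exp_nonneg _) hexp 2
              have h7 := mul_le_mul_of_nonneg_left h6 (mul_nonneg hK0 (sq_nonneg ‖h‖))
              calc K * (‖h‖ * Real.exp (K*s))^2 = K * ‖h‖^2 * (Real.exp (K*s))^2 := by ring
                _ ≤ K * ‖h‖^2 * (Real.exp (K*t))^2 := by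
                    nlinarith [sq_nonneg ‖h‖, Real.exp_nonneg (K*s), Real.exp_nonneg (K*t)]
                _ = K * (Real.exp (K*t))^2 * ‖h‖^2 := by ring
      have h2 := hqb0 x (fun s => φ s (x+h) - φ s x - w x h s) s
      linarith
    have key := apriori ΛE hE1 (C := 0) (D := D) (Kc := K) (g₀ := fun _ => (0:E))
      ht le_rfl hD0 hK0 hvc hqc (fun τ _ => by simp) heq hqb
    calc ‖φ t (x+h) - φ t x - w x h t‖ ≤ (0 + D * t) * Real.exp (K*t) := key t ⟨ht, le_refl t⟩
      _ = K * t * (Real.exp (K*t))^3 * ‖h‖^2 := by rw [hD]; ring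
  -- differentiability of the flow
  have hdiffAt : ∀ (t : ℝ), 0 ≤ t → ∀ (x : E), ∃ L : E →L[ℝ] E,
      HasFDerivAt (φ t) L x ∧ ∀ yy, L yy = w x yy t := by
    intro t ht x
    refine ⟨LinearMap.mkContinuous
      { toFun := fun yy => w x yy t
        map_add' := fun u u' => hwadd x u u' t ht
        map_smul' := fun r u => by simpa using hwsmul x u r t ht }
      (Real.exp (K*t)) (fun yy => by rw [mul_comm]; exact hwb x yy t ht), ?_, fun yy => rfl⟩
    rw [hasFDerivAt_iff_isLittleO_nhds_zero]
    apply littleo_of_sq (C := K * t * (Real.exp (K*t))^3) (by positivity)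
    intro h
    exact hfd x h t ht
  have hfderiv : ∀ (t : ℝ), 0 ≤ t → ∀ (x yy : E), fderiv ℝ (φ t) x yy = w x yy t := by
    intro t ht x yy
    obtain ⟨L, hL, hLe⟩ := hdiffAt t ht x
    rw [hL.fderiv]
    exact hLe yy
  -- Lipschitz dependence of w on the base point
  have hwd : ∀ (x h yy : E) (t : ℝ), 0 ≤ t →
      ‖w (x+h) yy t - w x yy t‖ ≤ K * t * (Real.exp (K*t))^3 * ‖h‖ * ‖yy‖ := by
    intro x h yy t ht
    set D : ℝ := K * (Real.exp (K*t))^2 * ‖h‖ * ‖yy‖ with hD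
    have hD0 : 0 ≤ D := by positivity
    have hvc : ContinuousOn (fun τ => w (x+h) yy τ - w x yy τ) (Icc 0 t) :=
      (hwC (x+h) yy t).sub (hwC x yy t)
    have hqc : ContinuousOn (fun s =>
        fderiv ℝ N (φ s (x+h)) (w (x+h) yy s) - fderiv ℝ N (φ s x) (w x yy s)) (Icc 0 t) :=
      (hqwC (x+h) (x+h) yy t).sub (hqwC x x yy t)
    have heq : ∀ τ ∈ Icc (0:ℝ) t, (fun τ => w (x+h) yy τ - w x yy τ) τ
        = (0:E) + ∫ s in (0:ℝ)..τ, ΛE (τ - s)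
            (fderiv ℝ N (φ s (x+h)) (w (x+h) yy s) - fderiv ℝ N (φ s x) (w x yy s)) := by
      intro τ hτ
      show w (x+h) yy τ - w x yy τ = _
      rw [hwe (x+h) yy τ hτ.1, hwe x yy τ hτ.1]
      rw [show ∀ A I1 I2 : E, (A+I1) - (A+I2) = (0:E) + (I1 - I2) from
        fun _ _ _ => by abel]
      rw [int_sub ΛE hE1 hstrongE hτ.1 (hqwC (x+h) (x+h) yy τ) (hqwC x x yy τ)]
    have hqb : ∀ s ∈ Icc (0:ℝ) t,
        ‖fderiv ℝ N (φ s (x+h)) (w (x+h) yy s) - fderiv ℝ N (φ s x) (w x yy s)‖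
        ≤ K * ‖w (x+h) yy s - w x yy s‖ + D := by
      intro s hs
      have hdec : fderiv ℝ N (φ s (x+h)) (w (x+h) yy s) - fderiv ℝ N (φ s x) (w x yy s)
          = fderiv ℝ N (φ s x) (w (x+h) yy s - w x yy s)
            + (fderiv ℝ N (φ s (x+h)) - fderiv ℝ N (φ s x)) (w (x+h) yy s) := by
        simp only [map_sub, ContinuousLinearMap.sub_apply]
        abel
      rw [hdec]
      refine le_trans (norm_add_le _ _) ?_
      have h1 : ‖fderiv ℝ N (φ s x) (w (x+h) yy s - w x yy s)‖
          ≤ K * ‖w (x+h) yy s - w x yy s‖ := hqb0 x (fun s => w (x+h) yy s - w x yy s) s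
      have h2 : ‖(fderiv ℝ N (φ s (x+h)) - fderiv ℝ N (φ s x)) (w (x+h) yy s)‖ ≤ D := by
        have hexp : Real.exp (K*s) ≤ Real.exp (K*t) :=
          Real.exp_le_exp.2 (mul_le_mul_of_nonneg_left hs.2 hK0)
        calc ‖(fderiv ℝ N (φ s (x+h)) - fderiv ℝ N (φ s x)) (w (x+h) yy s)‖
            ≤ ‖fderiv ℝ N (φ s (x+h)) - fderiv ℝ N (φ s x)‖ * ‖w (x+h) yy s‖ :=
              (fderiv ℝ N (φ s (x+h)) - fderiv ℝ N (φ s x)).le_opNorm _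
          _ ≤ (K * ‖φ s (x+h) - φ s x‖) * ‖w (x+h) yy s‖ := by
              apply mul_le_mul_of_nonneg_right ?_ (norm_nonneg _)
              exact hDNlip (φ s x) (φ s (x+h))
          _ ≤ (K * (‖h‖ * Real.exp (K*s))) * (‖yy‖ * Real.exp (K*s)) := by
              apply mul_le_mul (mul_le_mul_of_nonneg_left (hφlip x h s hs.1) hK0)
                (hwb (x+h) yy s hs.1) (norm_nonneg _) ?_
              positivity
          _ ≤ D := by
              rw [hD]
              have e6 : Real.exp (K*s) * Real.exp (K*s) ≤ Real.exp (K*t) * Real.exp (K*t) :=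
                mul_le_mul hexp hexp (Real.exp_nonneg _) (Real.exp_nonneg _)
              calc (K * (‖h‖ * Real.exp (K*s))) * (‖yy‖ * Real.exp (K*s))
                  = K * ‖h‖ * ‖yy‖ * (Real.exp (K*s) * Real.exp (K*s)) := by ring
                _ ≤ K * ‖h‖ * ‖yy‖ * (Real.exp (K*t) * Real.exp (K*t)) := by
                    apply mul_le_mul_of_nonneg_left e6 (by positivity)
                _ = K * (Real.exp (K*t))^2 * ‖h‖ * ‖yy‖ := by ring
      linarith
    have key := apriori ΛE hE1 (C := 0) (D := D) (Kc := K) (g₀ := fun _ => (0:E))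
      ht le_rfl hD0 hK0 hvc hqc (fun τ _ => by simp) heq hqb
    calc ‖w (x+h) yy t - w x yy t‖ ≤ (0 + D * t) * Real.exp (K*t) := key t ⟨ht, le_refl t⟩
      _ = K * t * (Real.exp (K*t))^3 * ‖h‖ * ‖yy‖ := by rw [hD]; ring
  -- second variation
  have hD2C : ∀ (u v' : E), ContinuousOn
      (fun s => fderiv ℝ (fderiv ℝ N) (φ s x₀) (w x₀ u s) (w x₀ v' s)) (Ici 0) := by
    intro u v'
    exact ((hD2Nc.comp_continuousOn (hφcont x₀)).clm_apply (hwc x₀ u)).clm_apply (hwc x₀ v')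
  have hvolt2 := fun (u v' : E) => volterra ΛE (fun s => fderiv ℝ N (φ s x₀))
    (fun τ => ∫ s in (0:ℝ)..τ, ΛE (τ - s)
      (fderiv ℝ (fderiv ℝ N) (φ s x₀) (w x₀ u s) (w x₀ v' s)))
    hE1 hstrongE hK0 (hcC x₀) (hcB x₀)
    (cont_int ΛE hE1 hstrongE (hD2C u v'))
  choose b hbc hbe using hvolt2
  have hgC2 : ∀ (u v' : E) (τ : ℝ), ContinuousOn
      (fun s => fderiv ℝ (fderiv ℝ N) (φ s x₀) (w x₀ u s) (w x₀ v' s)) (Icc 0 τ) :=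
    fun u v' τ => (hD2C u v').mono Icc_subset_Ici_self
  have hqbC : ∀ (u v' : E) (τ : ℝ), ContinuousOn
      (fun s => fderiv ℝ N (φ s x₀) (b u v' s)) (Icc 0 τ) :=
    fun u v' τ => ((hcC x₀).mono Icc_subset_Ici_self).clm_apply ((hbc u v').mono Icc_subset_Ici_self)
  have hD2b : ∀ (u v' : E) (s : ℝ), 0 ≤ s →
      ‖fderiv ℝ (fderiv ℝ N) (φ s x₀) (w x₀ u s) (w x₀ v' s)‖
        ≤ K * (‖u‖ * Real.exp (K*s)) * (‖v'‖ * Real.exp (K*s)) := by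
    intro u v' s hs
    calc ‖fderiv ℝ (fderiv ℝ N) (φ s x₀) (w x₀ u s) (w x₀ v' s)‖
        ≤ ‖fderiv ℝ (fderiv ℝ N) (φ s x₀) (w x₀ u s)‖ * ‖w x₀ v' s‖ :=
          (fderiv ℝ (fderiv ℝ N) (φ s x₀) (w x₀ u s)).le_opNorm _
      _ ≤ (‖fderiv ℝ (fderiv ℝ N) (φ s x₀)‖ * ‖w x₀ u s‖) * ‖w x₀ v' s‖ :=
          mul_le_mul_of_nonneg_right
            ((fderiv ℝ (fderiv ℝ N) (φ s x₀)).le_opNorm _) (norm_nonneg _)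
      _ ≤ (K * (‖u‖ * Real.exp (K*s))) * (‖v'‖ * Real.exp (K*s)) := by
          apply mul_le_mul ?_ (hwb x₀ v' s hs) (norm_nonneg _) (by positivity)
          exact mul_le_mul (hN2 _) (hwb x₀ u s hs) (norm_nonneg _) hK0
      _ = K * (‖u‖ * Real.exp (K*s)) * (‖v'‖ * Real.exp (K*s)) := by ring
  have hgb : ∀ (u v' : E) (τ : ℝ), 0 ≤ τ →
      ‖∫ s in (0:ℝ)..τ, ΛE (τ - s)
        (fderiv ℝ (fderiv ℝ N) (φ s x₀) (w x₀ u s) (w x₀ v' s))‖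
      ≤ K * (Real.exp (K*τ))^2 * ‖u‖ * ‖v'‖ * τ := by
    intro u v' τ hτ
    have hb1 : ∀ s ∈ Icc (0:ℝ) τ,
        ‖fderiv ℝ (fderiv ℝ N) (φ s x₀) (w x₀ u s) (w x₀ v' s)‖
        ≤ K * (Real.exp (K*τ))^2 * ‖u‖ * ‖v'‖ := by
      intro s hs
      have hexp : Real.exp (K*s) ≤ Real.exp (K*τ) :=
        Real.exp_le_exp.2 (mul_le_mul_of_nonneg_left hs.2 hK0)
      refine le_trans (hD2b u v' s hs.1) ?_
      have e6 : Real.exp (K*s) * Real.exp (K*s) ≤ Real.exp (K*τ) * Real.exp (K*τ) :=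
        mul_le_mul hexp hexp (Real.exp_nonneg _) (Real.exp_nonneg _)
      calc K * (‖u‖ * Real.exp (K*s)) * (‖v'‖ * Real.exp (K*s))
          = K * ‖u‖ * ‖v'‖ * (Real.exp (K*s) * Real.exp (K*s)) := by ring
        _ ≤ K * ‖u‖ * ‖v'‖ * (Real.exp (K*τ) * Real.exp (K*τ)) := by
            apply mul_le_mul_of_nonneg_left e6 (by positivity)
        _ = K * (Real.exp (K*τ))^2 * ‖u‖ * ‖v'‖ := by ring
    have h2 := norm_int_le ΛE hE1 hτ
      (intervalIntegrable_const (c := K * (Real.exp (K*τ))^2 * ‖u‖ * ‖v'‖)) hb1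
    rw [intervalIntegral.integral_const, smul_eq_mul] at h2
    calc ‖∫ s in (0:ℝ)..τ, ΛE (τ - s)
          (fderiv ℝ (fderiv ℝ N) (φ s x₀) (w x₀ u s) (w x₀ v' s))‖
        ≤ (τ - 0) * (K * (Real.exp (K*τ))^2 * ‖u‖ * ‖v'‖) := h2
      _ = K * (Real.exp (K*τ))^2 * ‖u‖ * ‖v'‖ * τ := by ring
  have hbb : ∀ (u v' : E) (t : ℝ), 0 ≤ t →
      ‖b u v' t‖ ≤ K * (Real.exp (K*t))^2 * ‖u‖ * ‖v'‖ * t * Real.exp (K*t) := by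
    intro u v' t ht
    set C : ℝ := K * (Real.exp (K*t))^2 * ‖u‖ * ‖v'‖ * t with hC
    have hC0 : 0 ≤ C := by positivity
    have key := apriori ΛE hE1 (C := C) (D := 0) (Kc := K) ht hC0 le_rfl hK0
      ((hbc u v').mono Icc_subset_Ici_self) (hqbC u v' t) ?_
      (fun τ hτ => hbe u v' τ hτ.1) (fun s hs => by
        have h4 := hqb0 x₀ (b u v') s
        simpa using h4)
    · calc ‖b u v' t‖ ≤ (C + 0*t) * Real.exp (K*t) := key t ⟨ht, le_refl t⟩
        _ = K * (Real.exp (K*t))^2 * ‖u‖ * ‖v'‖ * t * Real.exp (K*t) := by rw [hC]; ring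
    · intro τ hτ
      refine le_trans (hgb u v' τ hτ.1) ?_
      rw [hC]
      have hexp : Real.exp (K*τ) ≤ Real.exp (K*t) :=
        Real.exp_le_exp.2 (mul_le_mul_of_nonneg_left hτ.2 hK0)
      have e6 : (Real.exp (K*τ))^2 ≤ (Real.exp (K*t))^2 :=
        pow_le_pow_left₀ (Real.exp_nonneg _) hexp 2
      have e7 : (Real.exp (K*τ))^2 * τ ≤ (Real.exp (K*t))^2 * t := by
        apply mul_le_mul e6 hτ.2 hτ.1 (by positivity)
      calc K * (Real.exp (K*τ))^2 * ‖u‖ * ‖v'‖ * τ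
          = K * ‖u‖ * ‖v'‖ * ((Real.exp (K*τ))^2 * τ) := by ring
        _ ≤ K * ‖u‖ * ‖v'‖ * ((Real.exp (K*t))^2 * t) := by
            apply mul_le_mul_of_nonneg_left e7 (by positivity)
        _ = K * (Real.exp (K*t))^2 * ‖u‖ * ‖v'‖ * t := by ring
  have hb00 : ∀ (u v' : E), b u v' 0 = 0 := by
    intro u v'
    have h2 := hbe u v' 0 le_rfl
    simpa using h2
  -- bilinearity of b
  have hbadd1 : ∀ (u u' v' : E) (t : ℝ), 0 ≤ t → b (u+u') v' t = b u v' t + b u' v' t := by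
    intro u u' v' t ht
    have hdiff0 := huniq0 x₀ (fun τ => b (u+u') v' τ - b u v' τ - b u' v' τ)
      (((hbc (u+u') v').sub (hbc u v')).sub (hbc u' v')) ?_ t ht
    · have h2 : b (u+u') v' t - (b u v' t + b u' v' t) = 0 := by
        rw [← sub_sub]; exact hdiff0
      exact sub_eq_zero.mp h2
    · intro τ hτ
      show b (u+u') v' τ - b u v' τ - b u' v' τ = ∫ s in (0:ℝ)..τ,
        ΛE (τ - s) (fderiv ℝ N (φ s x₀) (b (u+u') v' s - b u v' s - b u' v' s))
      rw [hbe (u+u') v' τ hτ, hbe u v' τ hτ, hbe u' v' τ hτ]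
      rw [show ∀ A1 A2 A3 I1 I2 I3 : E, (A1+I1) - (A2+I2) - (A3+I3)
        = (A1 - A2 - A3) + (I1 - I2 - I3) from fun _ _ _ _ _ _ => by abel]
      rw [int_sub3 ΛE hE1 hstrongE hτ (hgC2 (u+u') v' τ) (hgC2 u v' τ) (hgC2 u' v' τ)]
      have e5 : (∫ s in (0:ℝ)..τ, ΛE (τ - s)
          (fderiv ℝ (fderiv ℝ N) (φ s x₀) (w x₀ (u+u') s) (w x₀ v' s)
            - fderiv ℝ (fderiv ℝ N) (φ s x₀) (w x₀ u s) (w x₀ v' s)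
            - fderiv ℝ (fderiv ℝ N) (φ s x₀) (w x₀ u' s) (w x₀ v' s)))
          = ∫ s in (0:ℝ)..τ, (0:E) := by
        apply intervalIntegral.integral_congr
        intro s hs
        rw [uIcc_of_le hτ] at hs
        simp only []
        rw [hwadd x₀ u u' s hs.1, map_add, ContinuousLinearMap.add_apply]
        simp
      rw [e5, intervalIntegral.integral_zero, zero_add]
      rw [int_sub3 ΛE hE1 hstrongE hτ (hqbC (u+u') v' τ) (hqbC u v' τ) (hqbC u' v' τ)]
      apply intervalIntegral.integral_congr
      intro s _
      simp [map_sub]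
  have hbsmul1 : ∀ (u v' : E) (r : ℝ) (t : ℝ), 0 ≤ t → b (r • u) v' t = r • b u v' t := by
    intro u v' r t ht
    have hdiff0 := huniq0 x₀ (fun τ => b (r • u) v' τ - r • b u v' τ)
      ((hbc (r • u) v').sub ((hbc u v').const_smul r)) ?_ t ht
    · exact sub_eq_zero.mp hdiff0
    · intro τ hτ
      show b (r • u) v' τ - r • b u v' τ = ∫ s in (0:ℝ)..τ,
        ΛE (τ - s) (fderiv ℝ N (φ s x₀) (b (r • u) v' s - r • b u v' s))
      rw [hbe (r • u) v' τ hτ, hbe u v' τ hτ]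
      rw [smul_add, show ∀ A1 A2 I1 I2 : E, (A1+I1) - (A2+I2) = (A1 - A2) + (I1 - I2) from
        fun _ _ _ _ => by abel]
      have eA : (∫ s in (0:ℝ)..τ, ΛE (τ - s)
          (fderiv ℝ (fderiv ℝ N) (φ s x₀) (w x₀ (r • u) s) (w x₀ v' s)))
          - r • (∫ s in (0:ℝ)..τ, ΛE (τ - s)
            (fderiv ℝ (fderiv ℝ N) (φ s x₀) (w x₀ u s) (w x₀ v' s))) = 0 := by
        have e2 : r • (∫ s in (0:ℝ)..τ, ΛE (τ - s)
            (fderiv ℝ (fderiv ℝ N) (φ s x₀) (w x₀ u s) (w x₀ v' s)))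
            = ∫ s in (0:ℝ)..τ, ΛE (τ - s)
              (r • fderiv ℝ (fderiv ℝ N) (φ s x₀) (w x₀ u s) (w x₀ v' s)) := by
          rw [← intervalIntegral.integral_smul]
          apply intervalIntegral.integral_congr
          intro s _
          simp [_root_.map_smul]
        rw [e2, int_sub ΛE hE1 hstrongE hτ (hgC2 (r • u) v' τ) (show ContinuousOn
            (fun s => r • fderiv ℝ (fderiv ℝ N) (φ s x₀) (w x₀ u s) (w x₀ v' s)) (Icc 0 τ) from (hgC2 u v' τ).const_smul r)]
        have e5 : (∫ s in (0:ℝ)..τ, ΛE (τ - s)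
            (fderiv ℝ (fderiv ℝ N) (φ s x₀) (w x₀ (r • u) s) (w x₀ v' s)
              - r • fderiv ℝ (fderiv ℝ N) (φ s x₀) (w x₀ u s) (w x₀ v' s)))
            = ∫ s in (0:ℝ)..τ, (0:E) := by
          apply intervalIntegral.integral_congr
          intro s hs
          rw [uIcc_of_le hτ] at hs
          simp only []
          rw [hwsmul x₀ u r s hs.1, _root_.map_smul, ContinuousLinearMap.smul_apply]
          simp
        rw [e5, intervalIntegral.integral_zero]
      rw [eA, zero_add]
      have e2' : r • (∫ s in (0:ℝ)..τ, ΛE (τ - s) (fderiv ℝ N (φ s x₀) (b u v' s)))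
          = ∫ s in (0:ℝ)..τ, ΛE (τ - s) (fderiv ℝ N (φ s x₀) (r • b u v' s)) := by
        rw [← intervalIntegral.integral_smul]
        apply intervalIntegral.integral_congr
        intro s _
        simp [_root_.map_smul]
      rw [e2', int_sub ΛE hE1 hstrongE hτ (hqbC (r • u) v' τ)
        (((hcC x₀).mono Icc_subset_Ici_self).clm_apply
          (show ContinuousOn (fun s => r • b u v' s) (Icc 0 τ) from ((hbc u v').mono Icc_subset_Ici_self).const_smul r))]
      apply intervalIntegral.integral_congr
      intro s _
      simp [map_sub]
  have hbadd2 : ∀ (u v' v'' : E) (t : ℝ), 0 ≤ t → b u (v'+v'') t = b u v' t + b u v'' t := by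
    intro u v' v'' t ht
    have hdiff0 := huniq0 x₀ (fun τ => b u (v'+v'') τ - b u v' τ - b u v'' τ)
      (((hbc u (v'+v'')).sub (hbc u v')).sub (hbc u v'')) ?_ t ht
    · have h2 : b u (v'+v'') t - (b u v' t + b u v'' t) = 0 := by
        rw [← sub_sub]; exact hdiff0
      exact sub_eq_zero.mp h2
    · intro τ hτ
      show b u (v'+v'') τ - b u v' τ - b u v'' τ = ∫ s in (0:ℝ)..τ,
        ΛE (τ - s) (fderiv ℝ N (φ s x₀) (b u (v'+v'') s - b u v' s - b u v'' s))
      rw [hbe u (v'+v'') τ hτ, hbe u v' τ hτ, hbe u v'' τ hτ]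
      rw [show ∀ A1 A2 A3 I1 I2 I3 : E, (A1+I1) - (A2+I2) - (A3+I3)
        = (A1 - A2 - A3) + (I1 - I2 - I3) from fun _ _ _ _ _ _ => by abel]
      rw [int_sub3 ΛE hE1 hstrongE hτ (hgC2 u (v'+v'') τ) (hgC2 u v' τ) (hgC2 u v'' τ)]
      have e5 : (∫ s in (0:ℝ)..τ, ΛE (τ - s)
          (fderiv ℝ (fderiv ℝ N) (φ s x₀) (w x₀ u s) (w x₀ (v'+v'') s)
            - fderiv ℝ (fderiv ℝ N) (φ s x₀) (w x₀ u s) (w x₀ v' s)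
            - fderiv ℝ (fderiv ℝ N) (φ s x₀) (w x₀ u s) (w x₀ v'' s)))
          = ∫ s in (0:ℝ)..τ, (0:E) := by
        apply intervalIntegral.integral_congr
        intro s hs
        rw [uIcc_of_le hτ] at hs
        simp only []
        rw [hwadd x₀ v' v'' s hs.1, map_add]
        simp
      rw [e5, intervalIntegral.integral_zero, zero_add]
      rw [int_sub3 ΛE hE1 hstrongE hτ (hqbC u (v'+v'') τ) (hqbC u v' τ) (hqbC u v'' τ)]
      apply intervalIntegral.integral_congr
      intro s _
      simp [map_sub]
  have hbsmul2 : ∀ (u v' : E) (r : ℝ) (t : ℝ), 0 ≤ t → b u (r • v') t = r • b u v' t := by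
    intro u v' r t ht
    have hdiff0 := huniq0 x₀ (fun τ => b u (r • v') τ - r • b u v' τ)
      ((hbc u (r • v')).sub ((hbc u v').const_smul r)) ?_ t ht
    · exact sub_eq_zero.mp hdiff0
    · intro τ hτ
      show b u (r • v') τ - r • b u v' τ = ∫ s in (0:ℝ)..τ,
        ΛE (τ - s) (fderiv ℝ N (φ s x₀) (b u (r • v') s - r • b u v' s))
      rw [hbe u (r • v') τ hτ, hbe u v' τ hτ]
      rw [smul_add, show ∀ A1 A2 I1 I2 : E, (A1+I1) - (A2+I2) = (A1 - A2) + (I1 - I2) from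
        fun _ _ _ _ => by abel]
      have eA : (∫ s in (0:ℝ)..τ, ΛE (τ - s)
          (fderiv ℝ (fderiv ℝ N) (φ s x₀) (w x₀ u s) (w x₀ (r • v') s)))
          - r • (∫ s in (0:ℝ)..τ, ΛE (τ - s)
            (fderiv ℝ (fderiv ℝ N) (φ s x₀) (w x₀ u s) (w x₀ v' s))) = 0 := by
        have e2 : r • (∫ s in (0:ℝ)..τ, ΛE (τ - s)
            (fderiv ℝ (fderiv ℝ N) (φ s x₀) (w x₀ u s) (w x₀ v' s)))
            = ∫ s in (0:ℝ)..τ, ΛE (τ - s)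
              (r • fderiv ℝ (fderiv ℝ N) (φ s x₀) (w x₀ u s) (w x₀ v' s)) := by
          rw [← intervalIntegral.integral_smul]
          apply intervalIntegral.integral_congr
          intro s _
          simp [_root_.map_smul]
        rw [e2, int_sub ΛE hE1 hstrongE hτ (hgC2 u (r • v') τ) (show ContinuousOn
            (fun s => r • fderiv ℝ (fderiv ℝ N) (φ s x₀) (w x₀ u s) (w x₀ v' s)) (Icc 0 τ) from (hgC2 u v' τ).const_smul r)]
        have e5 : (∫ s in (0:ℝ)..τ, ΛE (τ - s)
            (fderiv ℝ (fderiv ℝ N) (φ s x₀) (w x₀ u s) (w x₀ (r • v') s)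
              - r • fderiv ℝ (fderiv ℝ N) (φ s x₀) (w x₀ u s) (w x₀ v' s)))
            = ∫ s in (0:ℝ)..τ, (0:E) := by
          apply intervalIntegral.integral_congr
          intro s hs
          rw [uIcc_of_le hτ] at hs
          simp only []
          rw [hwsmul x₀ v' r s hs.1, _root_.map_smul]
          simp
        rw [e5, intervalIntegral.integral_zero]
      rw [eA, zero_add]
      have e2' : r • (∫ s in (0:ℝ)..τ, ΛE (τ - s) (fderiv ℝ N (φ s x₀) (b u v' s)))
          = ∫ s in (0:ℝ)..τ, ΛE (τ - s) (fderiv ℝ N (φ s x₀) (r • b u v' s)) := by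
        rw [← intervalIntegral.integral_smul]
        apply intervalIntegral.integral_congr
        intro s _
        simp [_root_.map_smul]
      rw [e2', int_sub ΛE hE1 hstrongE hτ (hqbC u (r • v') τ)
        (((hcC x₀).mono Icc_subset_Ici_self).clm_apply
          (show ContinuousOn (fun s => r • b u v' s) (Icc 0 τ) from ((hbc u v').mono Icc_subset_Ici_self).const_smul r))]
      apply intervalIntegral.integral_congr
      intro s _
      simp [map_sub]
  -- second-derivative remainder estimate
  have hrho2 : ∀ (h yy : E) (t : ℝ), 0 ≤ t →
      ‖w (x₀+h) yy t - w x₀ yy t - b h yy t‖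
      ≤ (K * (Real.exp (K*t))^3 + 2*K^2*t*(Real.exp (K*t))^4) * t * Real.exp (K*t)
          * ‖h‖^2 * ‖yy‖ := by
    intro h yy t ht
    set D : ℝ := (K * (Real.exp (K*t))^3 + 2*K^2*t*(Real.exp (K*t))^4) * ‖h‖^2 * ‖yy‖ with hDdef
    have hD0 : 0 ≤ D := by positivity
    have hvc : ContinuousOn (fun τ => w (x₀+h) yy τ - w x₀ yy τ - b h yy τ) (Icc 0 t) :=
      ((hwC (x₀+h) yy t).sub (hwC x₀ yy t)).sub ((hbc h yy).mono Icc_subset_Ici_self)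
    have hqc : ContinuousOn (fun s =>
        fderiv ℝ N (φ s (x₀+h)) (w (x₀+h) yy s) - fderiv ℝ N (φ s x₀) (w x₀ yy s)
          - fderiv ℝ (fderiv ℝ N) (φ s x₀) (w x₀ h s) (w x₀ yy s)
          - fderiv ℝ N (φ s x₀) (b h yy s)) (Icc 0 t) :=
      (((hqwC (x₀+h) (x₀+h) yy t).sub (hqwC x₀ x₀ yy t)).sub (hgC2 h yy t)).sub (hqbC h yy t)
    have heq : ∀ τ ∈ Icc (0:ℝ) t, (fun τ => w (x₀+h) yy τ - w x₀ yy τ - b h yy τ) τ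
        = (0:E) + ∫ s in (0:ℝ)..τ, ΛE (τ - s)
            (fderiv ℝ N (φ s (x₀+h)) (w (x₀+h) yy s) - fderiv ℝ N (φ s x₀) (w x₀ yy s)
              - fderiv ℝ (fderiv ℝ N) (φ s x₀) (w x₀ h s) (w x₀ yy s)
              - fderiv ℝ N (φ s x₀) (b h yy s)) := by
      intro τ hτ
      show w (x₀+h) yy τ - w x₀ yy τ - b h yy τ = _
      rw [hwe (x₀+h) yy τ hτ.1, hwe x₀ yy τ hτ.1, hbe h yy τ hτ.1]
      rw [show ∀ A I1 I2 G I3 : E, (A+I1) - (A+I2) - (G+I3)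
        = (0:E) + (I1 - I2 - G - I3) from fun _ _ _ _ _ => by abel]
      rw [int_sub4 ΛE hE1 hstrongE hτ.1 (hqwC (x₀+h) (x₀+h) yy τ) (hqwC x₀ x₀ yy τ)
        (hgC2 h yy τ) (hqbC h yy τ)]
    have hqb : ∀ s ∈ Icc (0:ℝ) t,
        ‖fderiv ℝ N (φ s (x₀+h)) (w (x₀+h) yy s) - fderiv ℝ N (φ s x₀) (w x₀ yy s)
          - fderiv ℝ (fderiv ℝ N) (φ s x₀) (w x₀ h s) (w x₀ yy s)
          - fderiv ℝ N (φ s x₀) (b h yy s)‖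
        ≤ K * ‖w (x₀+h) yy s - w x₀ yy s - b h yy s‖ + D := by
      intro s hs
      have hexp : Real.exp (K*s) ≤ Real.exp (K*t) :=
        Real.exp_le_exp.2 (mul_le_mul_of_nonneg_left hs.2 hK0)
      have hδ : ‖φ s (x₀+h) - φ s x₀‖ ≤ ‖h‖ * Real.exp (K*t) :=
        le_trans (hφlip x₀ h s hs.1) (mul_le_mul_of_nonneg_left hexp (norm_nonneg h))
      have hwp : ‖w (x₀+h) yy s‖ ≤ ‖yy‖ * Real.exp (K*t) :=
        le_trans (hwb (x₀+h) yy s hs.1) (mul_le_mul_of_nonneg_left hexp (norm_nonneg yy))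
      have hwyy : ‖w x₀ yy s‖ ≤ ‖yy‖ * Real.exp (K*t) :=
        le_trans (hwb x₀ yy s hs.1) (mul_le_mul_of_nonneg_left hexp (norm_nonneg yy))
      have hsE : s * (Real.exp (K*s))^3 ≤ t * (Real.exp (K*t))^3 :=
        mul_le_mul hs.2 (pow_le_pow_left₀ (Real.exp_nonneg _) hexp 3) (by positivity) ht
      have hdb : ‖w (x₀+h) yy s - w x₀ yy s‖
          ≤ K * t * (Real.exp (K*t))^3 * ‖h‖ * ‖yy‖ := by
        refine le_trans (hwd x₀ h yy s hs.1) ?_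
        calc K * s * (Real.exp (K*s))^3 * ‖h‖ * ‖yy‖
            = (s * (Real.exp (K*s))^3) * (K * ‖h‖ * ‖yy‖) := by ring
          _ ≤ (t * (Real.exp (K*t))^3) * (K * ‖h‖ * ‖yy‖) :=
              mul_le_mul_of_nonneg_right hsE (by positivity)
          _ = K * t * (Real.exp (K*t))^3 * ‖h‖ * ‖yy‖ := by ring
      have hρb : ‖φ s (x₀+h) - φ s x₀ - w x₀ h s‖
          ≤ K * t * (Real.exp (K*t))^3 * ‖h‖^2 := by
        refine le_trans (hfd x₀ h s hs.1) ?_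
        calc K * s * (Real.exp (K*s))^3 * ‖h‖^2
            = (s * (Real.exp (K*s))^3) * (K * ‖h‖^2) := by ring
          _ ≤ (t * (Real.exp (K*t))^3) * (K * ‖h‖^2) :=
              mul_le_mul_of_nonneg_right hsE (by positivity)
          _ = K * t * (Real.exp (K*t))^3 * ‖h‖^2 := by ring
      have hdec : fderiv ℝ N (φ s (x₀+h)) (w (x₀+h) yy s) - fderiv ℝ N (φ s x₀) (w x₀ yy s)
          - fderiv ℝ (fderiv ℝ N) (φ s x₀) (w x₀ h s) (w x₀ yy s)
          - fderiv ℝ N (φ s x₀) (b h yy s)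
          = fderiv ℝ N (φ s x₀) (w (x₀+h) yy s - w x₀ yy s - b h yy s)
            + ((fderiv ℝ N (φ s (x₀+h)) - fderiv ℝ N (φ s x₀)
                - fderiv ℝ (fderiv ℝ N) (φ s x₀) (φ s (x₀+h) - φ s x₀)) (w (x₀+h) yy s)
              + fderiv ℝ (fderiv ℝ N) (φ s x₀) (φ s (x₀+h) - φ s x₀)
                  (w (x₀+h) yy s - w x₀ yy s)
              + fderiv ℝ (fderiv ℝ N) (φ s x₀) ((φ s (x₀+h) - φ s x₀) - w x₀ h s)
                  (w x₀ yy s)) := by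
        simp only [map_sub, ContinuousLinearMap.sub_apply]
        abel
      have hT1 : ‖(fderiv ℝ N (φ s (x₀+h)) - fderiv ℝ N (φ s x₀)
          - fderiv ℝ (fderiv ℝ N) (φ s x₀) (φ s (x₀+h) - φ s x₀)) (w (x₀+h) yy s)‖
          ≤ K * (Real.exp (K*t))^3 * ‖h‖^2 * ‖yy‖ := by
        calc ‖(fderiv ℝ N (φ s (x₀+h)) - fderiv ℝ N (φ s x₀)
              - fderiv ℝ (fderiv ℝ N) (φ s x₀) (φ s (x₀+h) - φ s x₀)) (w (x₀+h) yy s)‖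
            ≤ ‖fderiv ℝ N (φ s (x₀+h)) - fderiv ℝ N (φ s x₀)
              - fderiv ℝ (fderiv ℝ N) (φ s x₀) (φ s (x₀+h) - φ s x₀)‖ * ‖w (x₀+h) yy s‖ :=
              ContinuousLinearMap.le_opNorm _ _
          _ ≤ (K * ‖φ s (x₀+h) - φ s x₀‖^2) * ‖w (x₀+h) yy s‖ :=
              mul_le_mul_of_nonneg_right (hDNtay (φ s x₀) (φ s (x₀+h))) (norm_nonneg _)
          _ ≤ (K * (‖h‖ * Real.exp (K*t))^2) * (‖yy‖ * Real.exp (K*t)) := by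
              apply mul_le_mul ?_ hwp (norm_nonneg _) (by positivity)
              exact mul_le_mul_of_nonneg_left
                (pow_le_pow_left₀ (norm_nonneg _) hδ 2) hK0
          _ = K * (Real.exp (K*t))^3 * ‖h‖^2 * ‖yy‖ := by ring
      have hT2 : ‖fderiv ℝ (fderiv ℝ N) (φ s x₀) (φ s (x₀+h) - φ s x₀)
            (w (x₀+h) yy s - w x₀ yy s)‖
          ≤ K^2 * t * (Real.exp (K*t))^4 * ‖h‖^2 * ‖yy‖ := by
        calc ‖fderiv ℝ (fderiv ℝ N) (φ s x₀) (φ s (x₀+h) - φ s x₀)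
              (w (x₀+h) yy s - w x₀ yy s)‖
            ≤ ‖fderiv ℝ (fderiv ℝ N) (φ s x₀) (φ s (x₀+h) - φ s x₀)‖
              * ‖w (x₀+h) yy s - w x₀ yy s‖ := ContinuousLinearMap.le_opNorm _ _
          _ ≤ (K * ‖φ s (x₀+h) - φ s x₀‖) * ‖w (x₀+h) yy s - w x₀ yy s‖ := by
              apply mul_le_mul_of_nonneg_right ?_ (norm_nonneg _)
              exact le_trans ((fderiv ℝ (fderiv ℝ N) (φ s x₀)).le_opNorm _)
                (mul_le_mul_of_nonneg_right (hN2 _) (norm_nonneg _))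
          _ ≤ (K * (‖h‖ * Real.exp (K*t))) * (K * t * (Real.exp (K*t))^3 * ‖h‖ * ‖yy‖) := by
              apply mul_le_mul (mul_le_mul_of_nonneg_left hδ hK0) hdb (norm_nonneg _)
                (by positivity)
          _ = K^2 * t * (Real.exp (K*t))^4 * ‖h‖^2 * ‖yy‖ := by ring
      have hT3 : ‖fderiv ℝ (fderiv ℝ N) (φ s x₀) ((φ s (x₀+h) - φ s x₀) - w x₀ h s)
            (w x₀ yy s)‖
          ≤ K^2 * t * (Real.exp (K*t))^4 * ‖h‖^2 * ‖yy‖ := by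
        calc ‖fderiv ℝ (fderiv ℝ N) (φ s x₀) ((φ s (x₀+h) - φ s x₀) - w x₀ h s) (w x₀ yy s)‖
            ≤ ‖fderiv ℝ (fderiv ℝ N) (φ s x₀) ((φ s (x₀+h) - φ s x₀) - w x₀ h s)‖
              * ‖w x₀ yy s‖ := ContinuousLinearMap.le_opNorm _ _
          _ ≤ (K * ‖(φ s (x₀+h) - φ s x₀) - w x₀ h s‖) * ‖w x₀ yy s‖ := by
              apply mul_le_mul_of_nonneg_right ?_ (norm_nonneg _)
              exact le_trans ((fderiv ℝ (fderiv ℝ N) (φ s x₀)).le_opNorm _)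
                (mul_le_mul_of_nonneg_right (hN2 _) (norm_nonneg _))
          _ ≤ (K * (K * t * (Real.exp (K*t))^3 * ‖h‖^2)) * (‖yy‖ * Real.exp (K*t)) := by
              apply mul_le_mul (mul_le_mul_of_nonneg_left hρb hK0) hwyy (norm_nonneg _)
                (by positivity)
          _ = K^2 * t * (Real.exp (K*t))^4 * ‖h‖^2 * ‖yy‖ := by ring
      rw [hdec]
      refine le_trans (norm_add_le _ _) ?_
      have h1 : ‖fderiv ℝ N (φ s x₀) (w (x₀+h) yy s - w x₀ yy s - b h yy s)‖
          ≤ K * ‖w (x₀+h) yy s - w x₀ yy s - b h yy s‖ :=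
        hqb0 x₀ (fun s => w (x₀+h) yy s - w x₀ yy s - b h yy s) s
      have h2 := norm_add_le ((fderiv ℝ N (φ s (x₀+h)) - fderiv ℝ N (φ s x₀)
          - fderiv ℝ (fderiv ℝ N) (φ s x₀) (φ s (x₀+h) - φ s x₀)) (w (x₀+h) yy s)
          + fderiv ℝ (fderiv ℝ N) (φ s x₀) (φ s (x₀+h) - φ s x₀)
              (w (x₀+h) yy s - w x₀ yy s))
        (fderiv ℝ (fderiv ℝ N) (φ s x₀) ((φ s (x₀+h) - φ s x₀) - w x₀ h s) (w x₀ yy s))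
      have h3 := norm_add_le ((fderiv ℝ N (φ s (x₀+h)) - fderiv ℝ N (φ s x₀)
          - fderiv ℝ (fderiv ℝ N) (φ s x₀) (φ s (x₀+h) - φ s x₀)) (w (x₀+h) yy s))
        (fderiv ℝ (fderiv ℝ N) (φ s x₀) (φ s (x₀+h) - φ s x₀) (w (x₀+h) yy s - w x₀ yy s))
      have hDsum : K * (Real.exp (K*t))^3 * ‖h‖^2 * ‖yy‖
          + K^2 * t * (Real.exp (K*t))^4 * ‖h‖^2 * ‖yy‖
          + K^2 * t * (Real.exp (K*t))^4 * ‖h‖^2 * ‖yy‖ = D := by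
        rw [hDdef]; ring
      linarith
    have key := apriori ΛE hE1 (C := 0) (D := D) (Kc := K) (g₀ := fun _ => (0:E))
      ht le_rfl hD0 hK0 hvc hqc (fun τ _ => by simp) heq hqb
    calc ‖w (x₀+h) yy t - w x₀ yy t - b h yy t‖ ≤ (0 + D * t) * Real.exp (K*t) :=
        key t ⟨ht, le_refl t⟩
      _ = (K * (Real.exp (K*t))^3 + 2*K^2*t*(Real.exp (K*t))^4) * t * Real.exp (K*t)
          * ‖h‖^2 * ‖yy‖ := by rw [hDdef]; ring
  -- assembly
  refine ⟨fun τ => b y z τ, ⟨hb00 y z, hbc y z, ?_⟩, ?_, ?_⟩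
  · -- the integral equation in the stated form
    intro t ht
    show b y z t = _
    rw [hbe y z t ht]
    rw [show (∫ s in (0:ℝ)..t, ΛE (t - s)
          (fderiv ℝ (fderiv ℝ N) (φ s x₀) (w x₀ y s) (w x₀ z s)))
        + (∫ s in (0:ℝ)..t, ΛE (t - s) (fderiv ℝ N (φ s x₀) (b y z s)))
        = ∫ s in (0:ℝ)..t, ΛE (t - s)
          (fderiv ℝ (fderiv ℝ N) (φ s x₀) (w x₀ y s) (w x₀ z s)
            + fderiv ℝ N (φ s x₀) (b y z s)) from
      int_add ΛE hE1 hstrongE ht (hgC2 y z t) (hqbC y z t)]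
    apply intervalIntegral.integral_congr
    intro s hs
    rw [uIcc_of_le ht] at hs
    simp only []
    rw [hfderiv s hs.1 x₀ y, hfderiv s hs.1 x₀ z]
    exact congrArg _ (add_comm _ _)
  · -- uniqueness
    rintro a' ⟨ha'0, ha'c, ha'e⟩ t ht
    have hsub : ∀ τ : ℝ, 0 ≤ τ → (fun τ => a' τ - b y z τ) τ = ∫ s in (0:ℝ)..τ,
        ΛE (τ - s) (fderiv ℝ N (φ s x₀) (a' s - b y z s)) := by
      intro τ hτ
      show a' τ - b y z τ = _
      have ha'e2 : a' τ = ∫ s in (0:ℝ)..τ, ΛE (τ - s)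
          (fderiv ℝ N (φ s x₀) (a' s)
            + fderiv ℝ (fderiv ℝ N) (φ s x₀) (w x₀ y s) (w x₀ z s)) := by
        rw [ha'e τ hτ]
        apply intervalIntegral.integral_congr
        intro s hs
        rw [uIcc_of_le hτ] at hs
        simp only []
        rw [hfderiv s hs.1 x₀ y, hfderiv s hs.1 x₀ z]
      have hae2 : b y z τ = ∫ s in (0:ℝ)..τ, ΛE (τ - s)
          (fderiv ℝ N (φ s x₀) (b y z s)
            + fderiv ℝ (fderiv ℝ N) (φ s x₀) (w x₀ y s) (w x₀ z s)) := by
        rw [hbe y z τ hτ]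
        rw [show (∫ s in (0:ℝ)..τ, ΛE (τ - s)
              (fderiv ℝ (fderiv ℝ N) (φ s x₀) (w x₀ y s) (w x₀ z s)))
            + (∫ s in (0:ℝ)..τ, ΛE (τ - s) (fderiv ℝ N (φ s x₀) (b y z s)))
            = ∫ s in (0:ℝ)..τ, ΛE (τ - s)
              (fderiv ℝ (fderiv ℝ N) (φ s x₀) (w x₀ y s) (w x₀ z s)
                + fderiv ℝ N (φ s x₀) (b y z s)) from
          int_add ΛE hE1 hstrongE hτ (hgC2 y z τ) (hqbC y z τ)]
        apply intervalIntegral.integral_congr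
        intro s _
        exact congrArg _ (add_comm _ _)
      have c1 : ContinuousOn (fun s => fderiv ℝ N (φ s x₀) (a' s)
          + fderiv ℝ (fderiv ℝ N) (φ s x₀) (w x₀ y s) (w x₀ z s)) (Icc 0 τ) :=
        (((hcC x₀).mono Icc_subset_Ici_self).clm_apply
          (ha'c.mono Icc_subset_Ici_self)).add (hgC2 y z τ)
      have c2 : ContinuousOn (fun s => fderiv ℝ N (φ s x₀) (b y z s)
          + fderiv ℝ (fderiv ℝ N) (φ s x₀) (w x₀ y s) (w x₀ z s)) (Icc 0 τ) :=
        (hqbC y z τ).add (hgC2 y z τ)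
      rw [ha'e2, hae2, int_sub ΛE hE1 hstrongE hτ c1 c2]
      apply intervalIntegral.integral_congr
      intro s _
      simp only []
      refine congrArg _ ?_
      rw [map_sub]
      abel
    have h0 := huniq0 x₀ (fun τ => a' τ - b y z τ) (ha'c.sub (hbc y z)) hsub t ht
    have h0' : a' t - b y z t = 0 := h0
    have := sub_eq_zero.mp h0'
    exact this
  · -- second derivative
    intro t ht
    constructor
    · filter_upwards with x
      obtain ⟨L, hL, _⟩ := hdiffAt t ht x
      exact hL.differentiableAt
    · set C1 : ℝ := K * (Real.exp (K*t))^2 * t * Real.exp (K*t) with hC1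
      have hC10 : 0 ≤ C1 := by positivity
      have hbnd : ∀ u v' : E, ‖b u v' t‖ ≤ C1 * ‖u‖ * ‖v'‖ := by
        intro u v'
        refine le_trans (hbb u v' t ht) (le_of_eq ?_)
        rw [hC1]; ring
      refine ⟨LinearMap.mkContinuous
        { toFun := fun u => LinearMap.mkContinuous
            { toFun := fun v' => b u v' t
              map_add' := fun p q => hbadd2 u p q t ht
              map_smul' := fun r p => by simpa using hbsmul2 u p r t ht }
            (C1 * ‖u‖) (fun v' => le_trans (hbnd u v') (le_of_eq (by ring)))
          map_add' := fun u u' => by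
            apply ContinuousLinearMap.ext
            intro v'
            exact hbadd1 u u' v' t ht
          map_smul' := fun r u => by
            apply ContinuousLinearMap.ext
            intro v'
            simpa using hbsmul1 u v' r t ht }
        C1 (fun u => ContinuousLinearMap.opNorm_le_bound _ (by positivity)
          (fun v' => le_trans (hbnd u v') (le_of_eq (by ring)))), ?_, rfl⟩
      rw [hasFDerivAt_iff_isLittleO_nhds_zero]
      apply littleo_of_sq
        (C := (K * (Real.exp (K*t))^3 + 2*K^2*t*(Real.exp (K*t))^4) * t * Real.exp (K*t))
        (by positivity)
      intro h
      apply ContinuousLinearMap.opNorm_le_bound _ (by positivity)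
      intro yy
      rw [show ∀ (F1 F2 F3 : E →L[ℝ] E), (F1 - F2 - F3) yy = F1 yy - F2 yy - F3 yy from
        fun _ _ _ => by simp]
      rw [hfderiv t ht (x₀+h) yy, hfderiv t ht x₀ yy]
      exact le_trans (hrho2 h yy t ht) (le_of_eq (by ring))
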